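/- arXiv:1802.00467 — 8 statements merged into one kernel-verified Lean document; each statement's English description precedes it below -/
import Mathlib

section
/- Let σ be a permutation of {1,…,δ} for which there is some metrically homogeneous graph Γ of diameter δ twistable by σ, and let k = σ⁻¹(1). Then σ(ik) = i for all positive integers i satisfying ik ≤ δ. -/
open SimpleGraph

section Defs

variable {V : Type*}

/-- A graph is *metrically homogeneous* if it is connected and every
distance-preserving map defined on a finite set of vertices extends to a
distance-preserving bijection of the whole vertex set (with respect to the
path metric). -/
def IsMetricallyHomogeneous (G : SimpleGraph V) : Prop :=
  G.Connected ∧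
  ∀ (s : Finset V) (f : V → V),
    (∀ x ∈ s, ∀ y ∈ s, G.dist (f x) (f y) = G.dist x y) →
    ∃ g : V ≃ V, (∀ x y : V, G.dist (g x) (g y) = G.dist x y) ∧ ∀ x ∈ s, g x = f x

/-- `δ` is the diameter of `G` (with respect to the path metric). -/
def HasDiameter (G : SimpleGraph V) (δ : ℕ) : Prop :=
  (∀ x y : V, G.dist x y ≤ δ) ∧ ∃ x y : V, G.dist x y = δ

/-- The set of (nonzero) distances realized in `G`. -/
def DistSet (G : SimpleGraph V) : Set ℕ :=
  {n : ℕ | 0 < n ∧ ∃ x y : V, G.dist x y = n}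

/-- `G` is of *generic type*: any two vertices at distance `2` have infinitely
many common neighbors forming an independent set, and the set of neighbors of
any fixed vertex (with the induced metric) carries no non-trivial equivalence
relation invariant under all of its self-isometries. -/
def GenericType (G : SimpleGraph V) : Prop :=
  (∀ x y : V, G.dist x y = 2 →
    {z : V | G.Adj x z ∧ G.Adj y z}.Infinite ∧
    ∀ z w : V, (G.Adj x z ∧ G.Adj y z) → (G.Adj x w ∧ G.Adj y w) → ¬ G.Adj z w) ∧
  ∀ v : V, ∀ r : G.neighborSet v → G.neighborSet v → Prop,
    Equivalence r →
    (∀ g : G.neighborSet v ≃ G.neighborSet v,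
      (∀ x y : G.neighborSet v, G.dist (g x : V) (g y : V) = G.dist (x : V) (y : V)) →
      ∀ x y : G.neighborSet v, r x y → r (g x) (g y)) →
    (∀ x y, r x y) ∨ (∀ x y, r x y → x = y)

/-- A triangle of type `(a,b,c)` is realized in `G`. -/
def RealizesTriangle (G : SimpleGraph V) (a b c : ℕ) : Prop :=
  ∃ x y z : V, G.dist x y = a ∧ G.dist y z = b ∧ G.dist x z = c

/-- `G` contains a triangle (three distinct vertices) of perimeter `p`. -/
def RealizesPerimeter (G : SimpleGraph V) (p : ℕ) : Prop :=
  ∃ x y z : V, x ≠ y ∧ y ≠ z ∧ x ≠ z ∧ G.dist x y + G.dist y z + G.dist x z = p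

/-- `k` is the parameter `K₁` of `G`: the least `m` such that a triangle of
type `(m,m,1)` is realized in `G`. -/
def IsK1 (G : SimpleGraph V) (k : ℕ) : Prop :=
  IsLeast {m : ℕ | RealizesTriangle G m m 1} k

/-- `k` is the parameter `K₂` of `G`: the greatest `m` such that a triangle of
type `(m,m,1)` is realized in `G`. -/
def IsK2 (G : SimpleGraph V) (k : ℕ) : Prop :=
  IsGreatest {m : ℕ | RealizesTriangle G m m 1} k

/-- `c` is the parameter `C₀` of `G` (relative to the diameter `δ`): the least
even number greater than `2δ` such that no triangle of perimeter `c` occurs. -/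
def IsC0 (G : SimpleGraph V) (δ c : ℕ) : Prop :=
  IsLeast {c' : ℕ | Even c' ∧ 2 * δ < c' ∧ ¬ RealizesPerimeter G c'} c

/-- `c` is the parameter `C₁` of `G` (relative to the diameter `δ`): the least
odd number greater than `2δ` such that no triangle of perimeter `c` occurs. -/
def IsC1 (G : SimpleGraph V) (δ c : ℕ) : Prop :=
  IsLeast {c' : ℕ | Odd c' ∧ 2 * δ < c' ∧ ¬ RealizesPerimeter G c'} c

/-- `G` (of diameter `δ`) is antipodal: every vertex has a unique vertex at
distance `δ` from it. -/
def IsAntipodal (G : SimpleGraph V) (δ : ℕ) : Prop :=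
  ∀ v : V, ∃! w : V, G.dist v w = δ

/-- `G` is bipartite. -/
def IsBipartiteGraph (G : SimpleGraph V) : Prop :=
  ∃ f : V → Bool, ∀ x y : V, G.Adj x y → f x ≠ f y

/-- `G` is complete multipartite: there is an equivalence relation such that
two vertices are adjacent exactly when they are inequivalent. -/
def IsCompleteMultipartiteGraph (G : SimpleGraph V) : Prop :=
  ∃ r : V → V → Prop, Equivalence r ∧ ∀ x y : V, G.Adj x y ↔ ¬ r x y

/-- `G` is an `n`-cycle. -/
def IsNCycle (G : SimpleGraph V) (n : ℕ) : Prop :=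
  ∃ e : V ≃ ZMod n, ∀ x y : V, G.Adj x y ↔ (e x - e y = 1 ∨ e y - e x = 1)

/-- The permutation `ρ` of `{1,…,δ}`. -/
def rhoFun (δ i : ℕ) : ℕ := if 2 * i ≤ δ then 2 * i else 2 * (δ - i) + 1

/-- The permutation `ρ⁻¹` of `{1,…,δ}`. -/
def rhoInvFun (δ i : ℕ) : ℕ := if Even i then i / 2 else δ - (i - 1) / 2

/-- The involution `τ_ε` of `{1,…,δ}`, for `ε = 0` or `1`. -/
def tauFun (δ ε i : ℕ) : ℕ := if Odd (min i (δ + ε - i)) then δ + ε - i else i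

/-- The `n`-cycle graph on `ZMod n`. -/
def zmodCycleGraph (n : ℕ) : SimpleGraph (ZMod n) where
  Adj x y := x ≠ y ∧ (x - y = 1 ∨ y - x = 1)
  symm := ⟨fun x y h => ⟨h.1.symm, h.2.symm⟩⟩
  loopless := ⟨fun x h => h.1 rfl⟩

end Defs


section Aux

variable {V : Type*} {G H : SimpleGraph V}

private lemma aux_dist_getVert_le (hc : G.Connected) :
    ∀ {u v : V} (p : G.Walk u v) (a b : ℕ), a ≤ b →
      G.dist (p.getVert a) (p.getVert b) ≤ b - a
  | _, _, .nil, a, b, _ => by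
      simp [SimpleGraph.Walk.getVert, SimpleGraph.dist_self]
  | u, v, .cons hadj q, 0, 0, _ => by simp
  | u, v, .cons hadj q, 0, b + 1, _ => by
      rw [SimpleGraph.Walk.getVert_zero, SimpleGraph.Walk.getVert_cons_succ]
      have h1 : G.dist u (q.getVert 0) = 1 := by
        rw [SimpleGraph.Walk.getVert_zero]
        exact SimpleGraph.dist_eq_one_iff_adj.mpr hadj
      have h2 := aux_dist_getVert_le hc q 0 b (Nat.zero_le b)
      have h3 := hc.dist_triangle (u := u) (v := q.getVert 0) (w := q.getVert b)
      omega
  | u, v, .cons hadj q, a + 1, b + 1, h => by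
      rw [SimpleGraph.Walk.getVert_cons_succ, SimpleGraph.Walk.getVert_cons_succ]
      have := aux_dist_getVert_le hc q a b (Nat.le_of_succ_le_succ h)
      simpa using this

private lemma aux_geodesic (hc : G.Connected) {x y : V} (p : G.Walk x y)
    (hp : p.length = G.dist x y) {a b : ℕ} (hab : a ≤ b) (hb : b ≤ p.length) :
    G.dist (p.getVert a) (p.getVert b) = b - a := by
  have hle := aux_dist_getVert_le hc p a b hab
  have h1 : G.dist x (p.getVert a) ≤ a := by
    have := aux_dist_getVert_le hc p 0 a (Nat.zero_le a)
    rwa [SimpleGraph.Walk.getVert_zero] at this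
  have h2 : G.dist (p.getVert b) y ≤ p.length - b := by
    have := aux_dist_getVert_le hc p b p.length hb
    rwa [SimpleGraph.Walk.getVert_length] at this
  have h3 := hc.dist_triangle (u := x) (v := p.getVert a) (w := y)
  have h4 := hc.dist_triangle (u := p.getVert a) (v := p.getVert b) (w := y)
  omega

private lemma aux_exists_dist (hc : G.Connected) {x y : V} {n δ : ℕ}
    (hxy : G.dist x y = δ) (hn : n ≤ δ) : ∃ u v : V, G.dist u v = n := by
  obtain ⟨p, hp⟩ := hc.exists_walk_length_eq_dist x y
  refine ⟨x, p.getVert n, ?_⟩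
  have := aux_geodesic hc p hp (Nat.zero_le n) (by omega)
  rwa [SimpleGraph.Walk.getVert_zero, Nat.sub_zero] at this

private lemma aux_walk_bound (hc : G.Connected) {k : ℕ}
    (hk : ∀ u v : V, H.Adj u v → G.dist u v = k) :
    ∀ {u v : V} (q : H.Walk u v), G.dist u v ≤ q.length * k
  | _, _, .nil => by simp
  | u, v, .cons (v := w) hadj q => by
      have h1 : G.dist u w = k := hk _ _ hadj
      have h2 := aux_walk_bound hc hk q
      have h3 := hc.dist_triangle (u := u) (v := w) (w := v)
      rw [SimpleGraph.Walk.length_cons]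
      have : (q.length + 1) * k = q.length * k + k := by ring
      omega

end Aux

/-- if `Γ` is twistable by `σ` and `k = σ⁻¹(1)`, then
`σ(i·k) = i` whenever `i·k ≤ δ`. -/
theorem sigma_on_multiples_of_inv_one {V : Type*} (G H : SimpleGraph V) (δ : ℕ)
    (hδ : 1 ≤ δ) (σ : Equiv.Perm ℕ)
    (hG : IsMetricallyHomogeneous G) (hdiam : HasDiameter G δ)
    (hperm : ∀ i ∈ Finset.Icc 1 δ, σ i ∈ Finset.Icc 1 δ)
    (hH : IsMetricallyHomogeneous H)
    (htw : ∀ x y : V, x ≠ y → H.dist x y = σ (G.dist x y)) :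
    ∀ i : ℕ, 0 < i → i * σ.symm 1 ≤ δ → σ (i * σ.symm 1) = i := by
  classical
  intro i hi hik
  set k := σ.symm 1 with hkdef
  have hGc := hG.1
  have hHc := hH.1
  -- k ∈ [1, δ]
  have hkIcc : k ∈ Finset.Icc 1 δ := by
    have hinj : Function.Injective σ := σ.injective
    have himg : (Finset.Icc 1 δ).image σ ⊆ Finset.Icc 1 δ := by
      intro a ha
      obtain ⟨b, hb, rfl⟩ := Finset.mem_image.mp ha
      exact hperm b hb
    have hcard : (Finset.Icc 1 δ).card ≤ ((Finset.Icc 1 δ).image σ).card := by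
      rw [Finset.card_image_of_injective _ hinj]
    have heq := Finset.eq_of_subset_of_card_le himg hcard
    have h1 : (1 : ℕ) ∈ (Finset.Icc 1 δ).image σ := by
      rw [heq]; simp [hδ]
    obtain ⟨j, hj, hj1⟩ := Finset.mem_image.mp h1
    have : k = j := by rw [hkdef, ← hj1, Equiv.symm_apply_apply]
    rwa [this]
  have hk1 : 1 ≤ k := (Finset.mem_Icc.mp hkIcc).1
  -- H-adjacency ↔ G-distance k
  have hHadj : ∀ u v : V, H.Adj u v → G.dist u v = k := by
    intro u v h
    have h1 : H.dist u v = 1 := SimpleGraph.dist_eq_one_iff_adj.mpr h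
    have h2 := htw u v h.ne
    rw [h1] at h2
    rw [hkdef, h2, Equiv.symm_apply_apply]
  have hAdjOfk : ∀ u v : V, G.dist u v = k → H.Adj u v := by
    intro u v h
    have hne : u ≠ v := by
      intro e; subst e; rw [SimpleGraph.dist_self] at h; omega
    have h2 : H.dist u v = 1 := by
      rw [htw u v hne, h, hkdef, Equiv.apply_symm_apply]
    exact SimpleGraph.dist_eq_one_iff_adj.mp h2
  -- get a pair at G-distance i * k
  obtain ⟨x0, y0, hxy0⟩ := hdiam.2
  obtain ⟨x, y, hxy⟩ := aux_exists_dist hGc hxy0 hik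
  obtain ⟨p, hp⟩ := hGc.exists_walk_length_eq_dist x y
  have hplen : p.length = i * k := by rw [hp, hxy]
  -- upper bound : H.dist x y ≤ i
  have hub : ∀ j, j ≤ i → H.dist x (p.getVert (j * k)) ≤ j := by
    intro j
    induction j with
    | zero => intro _; simp
    | succ j ih =>
      intro hji
      have h1 := ih (by omega)
      have hmul1 : j * k ≤ (j + 1) * k := Nat.mul_le_mul_right k (by omega)
      have hmul2 : (j + 1) * k ≤ p.length := by
        rw [hplen]; exact Nat.mul_le_mul_right k hji
      have hd := aux_geodesic hGc p hp hmul1 hmul2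
      have hdk : G.dist (p.getVert (j * k)) (p.getVert ((j + 1) * k)) = k := by
        rw [hd, Nat.succ_mul]; omega
      have h2 : H.dist (p.getVert (j * k)) (p.getVert ((j + 1) * k)) = 1 :=
        SimpleGraph.dist_eq_one_iff_adj.mpr (hAdjOfk _ _ hdk)
      have h3 := hHc.dist_triangle (u := x) (v := p.getVert (j * k))
        (w := p.getVert ((j + 1) * k))
      omega
  have hub2 : H.dist x y ≤ i := by
    have := hub i le_rfl
    rw [← hplen, SimpleGraph.Walk.getVert_length] at this
    exact this
  -- lower bound : i ≤ H.dist x y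
  have hikpos : 0 < i * k := Nat.mul_pos hi (by omega)
  have hne : x ≠ y := by
    intro e; subst e; rw [SimpleGraph.dist_self] at hxy; omega
  obtain ⟨q, hq⟩ := hHc.exists_walk_length_eq_dist x y
  have hlb : G.dist x y ≤ q.length * k := aux_walk_bound hGc hHadj q
  rw [hxy, hq] at hlb
  have hlb2 : i ≤ H.dist x y := Nat.le_of_mul_le_mul_right hlb (by omega)
  have hfin : H.dist x y = σ (i * k) := by rw [htw x y hne, hxy]
  omega
end

section
/- Let Γ be a metrically homogeneous graph and let σ be a non-trivial permutation of the set of distances of Γ such that Γ^σ is also a metrically homogeneous graph. Then the diameter δ of Γ is finite. -/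
open SimpleGraph

section Helpers

variable {V : Type*}

lemma my_step {G : SimpleGraph V} (hc : G.Connected) {x y : V} {d : ℕ}
    (h : G.dist x y = d + 1) : ∃ z : V, G.Adj x z ∧ G.dist z y = d := by
  obtain ⟨p, hp⟩ := hc.exists_walk_length_eq_dist x y
  cases p with
  | nil => rw [h] at hp; simp at hp
  | @cons _ w _ hadj q =>
    refine ⟨w, hadj, ?_⟩
    have h1 : G.dist w y ≤ d := by
      have := SimpleGraph.dist_le q
      rw [h] at hp; simp at hp
      omega
    have h2 : G.dist x y ≤ G.dist x w + G.dist w y := hc.dist_triangle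
    have h3 : G.dist x w ≤ 1 := by
      have := SimpleGraph.dist_le (SimpleGraph.Walk.cons hadj (SimpleGraph.Walk.nil))
      simpa using this
    omega

lemma my_split {G : SimpleGraph V} (hc : G.Connected) :
    ∀ (n : ℕ) {x y : V} {d : ℕ}, G.dist x y = d → n ≤ d →
      ∃ z : V, G.dist x z = n ∧ G.dist z y = d - n := by
  intro n
  induction n with
  | zero => intro x y d h _; exact ⟨x, by simp [SimpleGraph.dist_self], by simpa using h⟩
  | succ n ih =>
    intro x y d h hn
    obtain ⟨z, hz1, hz2⟩ := ih h (by omega)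
    have : G.dist z y = (d - n - 1) + 1 := by omega
    obtain ⟨w, hw1, hw2⟩ := my_step hc this
    refine ⟨w, ?_, by omega⟩
    have hzw : G.dist z w ≤ 1 := by
      have := SimpleGraph.dist_le (SimpleGraph.Walk.cons hw1 (SimpleGraph.Walk.nil))
      simpa using this
    have t1 : G.dist x w ≤ G.dist x z + G.dist z w := hc.dist_triangle
    have t2 : G.dist x y ≤ G.dist x w + G.dist w y := hc.dist_triangle
    omega


lemma my_perm_id (σ : Equiv.Perm ℕ)
    (h1 : ∀ n, 0 < n → 0 < σ n)
    (hm : 0 < σ.symm 1)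
    (hsub : ∀ a b, 0 < a → 0 < b → σ (a + b) ≤ σ a + σ b) :
    ∀ n, 0 < n → σ n = n := by
  set m := σ.symm 1 with hmdef
  have hσm : σ m = 1 := σ.apply_symm_apply 1
  -- σ (k*m) ≤ k
  have hkm : ∀ k, 0 < k → σ (k * m) ≤ k := by
    intro k hk
    induction k with
    | zero => omega
    | succ k ih =>
      rcases Nat.eq_zero_or_pos k with hk0 | hk0
      · subst hk0; simp [hσm]
      · have := hsub (k * m) m (by positivity) hm
        have := ih hk0
        have : σ (k * m + m) ≤ k + 1 := by omega
        simpa [Nat.succ_mul] using this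
  -- σ (k*m) = k by strong induction
  have hkm' : ∀ k, 0 < k → σ (k * m) = k := by
    intro k
    induction k using Nat.strong_induction_on with
    | _ k ih =>
      intro hk
      have hle := hkm k hk
      have hpos := h1 (k * m) (by positivity)
      by_contra hne
      set j := σ (k * m) with hj
      have hjk : j < k := by omega
      have hjpos : 0 < j := hpos
      have := ih j hjk hjpos
      have : σ (j * m) = σ (k * m) := by rw [this, hj]
      have : j * m = k * m := σ.injective this
      have : j = k := Nat.eq_of_mul_eq_mul_right hm this
      omega
  -- σ 1 = 1
  have h11 : σ 1 = 1 := by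
    have hc : 0 < σ 1 := h1 1 one_pos
    have := hkm' (σ 1) hc
    have : σ 1 * m = 1 := σ.injective this
    have hm1 : m = 1 := by nlinarith
    rw [hm1] at hσm
    exact hσm
  -- σ n ≤ n
  have hle : ∀ n, 0 < n → σ n ≤ n := by
    intro n hn
    induction n with
    | zero => omega
    | succ n ih =>
      rcases Nat.eq_zero_or_pos n with h0 | h0
      · subst h0; simp [h11]
      · have := hsub n 1 h0 one_pos
        have := ih h0
        omega
  -- σ n = n
  intro n
  induction n using Nat.strong_induction_on with
  | _ n ih =>
    intro hn
    have h := hle n hn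
    by_contra hne
    have hpos := h1 n hn
    have hjk : σ n < n := by omega
    have := ih (σ n) hjk hpos
    exact hne (σ.injective this ▸ this)

end Helpers

/-- a metrically homogeneous graph admitting a non-trivial twist
has finite diameter. -/
theorem twistable_implies_finite_diameter {V : Type*} (G H : SimpleGraph V)
    (σ : Equiv.Perm ℕ)
    (hG : IsMetricallyHomogeneous G)
    (hmaps : ∀ n ∈ DistSet G, σ n ∈ DistSet G)
    (hmaps' : ∀ n ∈ DistSet G, σ.symm n ∈ DistSet G)
    (hnontriv : ∃ n ∈ DistSet G, σ n ≠ n)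
    (hH : IsMetricallyHomogeneous H)
    (htw : ∀ x y : V, x ≠ y → H.dist x y = σ (G.dist x y)) :
    ∃ δ : ℕ, ∀ x y : V, G.dist x y ≤ δ := by
  by_contra hbd
  push_neg at hbd
  have hc : G.Connected := hG.1
  have hHc : H.Connected := hH.1
  -- every positive natural number is realized as a G-distance
  have hreal : ∀ n : ℕ, 0 < n → ∃ x y : V, G.dist x y = n := by
    intro n hn
    obtain ⟨x, y, hxy⟩ := hbd n
    obtain ⟨z, hz, -⟩ := my_split hc n (rfl : G.dist x y = G.dist x y) (le_of_lt hxy)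
    exact ⟨x, z, hz⟩
  have hds : ∀ n : ℕ, 0 < n → n ∈ DistSet G := fun n hn => ⟨hn, hreal n hn⟩
  have h1 : ∀ n, 0 < n → 0 < σ n := fun n hn => (hmaps n (hds n hn)).1
  have hm : 0 < σ.symm 1 := (hmaps' 1 (hds 1 one_pos)).1
  have hne_of_dist : ∀ {x y : V} {n : ℕ}, G.dist x y = n → 0 < n → x ≠ y := by
    intro x y n h hn heq
    subst heq
    rw [SimpleGraph.dist_self] at h
    omega
  have hsub : ∀ a b, 0 < a → 0 < b → σ (a + b) ≤ σ a + σ b := by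
    intro a b ha hb
    obtain ⟨x, y, hxy⟩ := hreal (a + b) (by omega)
    obtain ⟨z, hz1, hz2⟩ := my_split hc a hxy (by omega)
    have hz2' : G.dist z y = b := by omega
    have hxz : x ≠ z := hne_of_dist hz1 ha
    have hzy : z ≠ y := hne_of_dist hz2' hb
    have hxy' : x ≠ y := hne_of_dist hxy (by omega)
    have tH : H.dist x y ≤ H.dist x z + H.dist z y := hHc.dist_triangle
    rw [htw x y hxy', htw x z hxz, htw z y hzy, hxy, hz1, hz2'] at tH
    exact tH
  obtain ⟨n, hn, hσn⟩ := hnontriv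
  exact hσn (my_perm_id σ h1 hm hsub n hn.1)
end

section
/- Let Γ be the n-cycle C_n with n ≥ 3, so that Γ is a metrically homogeneous graph of diameter δ = ⌊n/2⌋. Then the permutations σ of {1,…,δ} for which Γ^σ is a metrically homogeneous graph are exactly the maps μ_k for k a unit modulo n, where μ_k sends each distance i to the element of {1,…,δ} representing the class ±ki modulo n; i.e., the group of such permutations is U_n/(±1) acting on the set of distances. -/
open SimpleGraph

namespace TwistAux


def dmin (n : ℕ) (c : ZMod n) : ℕ := min c.val (n - c.val)

variable {n : ℕ} [NeZero n]

lemma val_add_cases (a b : ZMod n) :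
    (a + b).val = a.val + b.val ∨ (a + b).val + n = a.val + b.val := by
  have h1 := ZMod.val_add a b
  have ha := a.val_lt; have hb := b.val_lt
  rcases Nat.lt_or_ge (a.val + b.val) n with h | h
  · left; rw [h1, Nat.mod_eq_of_lt h]
  · right; rw [h1, Nat.mod_eq_sub_mod h, Nat.mod_eq_of_lt (by omega)]; omega

lemma dmin_neg (c : ZMod n) : dmin n (-c) = dmin n c := by
  have h := val_add_cases c (-c)
  rw [add_neg_cancel, ZMod.val_zero] at h
  have h1 := c.val_lt; have h2 := (-c).val_lt
  unfold dmin; omega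

lemma dmin_add_le (a b : ZMod n) : dmin n (a + b) ≤ dmin n a + dmin n b := by
  have h := val_add_cases a b
  have h1 := a.val_lt; have h2 := b.val_lt; have h3 := (a + b).val_lt
  unfold dmin; omega

lemma dmin_one (hn : 2 ≤ n) : dmin n 1 = 1 := by
  haveI : Fact (1 < n) := ⟨by omega⟩
  unfold dmin; rw [ZMod.val_one]; omega

lemma dmin_mem (c : ZMod n) (hc : c ≠ 0) : dmin n c ∈ Finset.Icc 1 (n / 2) := by
  have hv := c.val_lt
  have h0 : c.val ≠ 0 := fun h => hc ((ZMod.val_eq_zero c).mp h)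
  simp only [dmin, Finset.mem_Icc]; omega

lemma dmin_cast (c : ZMod n) :
    ((dmin n c : ℕ) : ZMod n) = c ∨ ((dmin n c : ℕ) : ZMod n) = -c := by
  unfold dmin
  rcases le_total c.val (n - c.val) with h | h
  · left; rw [min_eq_left h]; exact ZMod.natCast_rightInverse c
  · right; rw [min_eq_right h, Nat.cast_sub c.val_lt.le, ZMod.natCast_self,
      ZMod.natCast_rightInverse c, zero_sub]

lemma rep_unique {i i' : ℕ} (hi : i ∈ Finset.Icc 1 (n / 2)) (hi' : i' ∈ Finset.Icc 1 (n / 2))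
    (h : (i : ZMod n) = (i' : ZMod n) ∨ (i : ZMod n) = -(i' : ZMod n)) : i = i' := by
  simp only [Finset.mem_Icc] at hi hi'
  have hn : 0 < n := NeZero.pos n
  rcases h with h | h
  · have := congrArg ZMod.val h
    rwa [ZMod.val_cast_of_lt (by omega), ZMod.val_cast_of_lt (by omega)] at this
  · have h2 : ((i + i' : ℕ) : ZMod n) = 0 := by push_cast; rw [h]; ring
    rw [ZMod.natCast_eq_zero_iff] at h2
    have := Nat.le_of_dvd (by omega) h2
    have h3 : i + i' = n := by
      rcases h2 with ⟨q, hq⟩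
      have : i + i' ≤ 2 * (n / 2) := by omega
      omega
    omega

lemma eq_or_eq_neg_of_dmin_eq {a b : ZMod n} (h : dmin n a = dmin n b) : a = b ∨ a = -b := by
  have ha := a.val_lt; have hb := b.val_lt
  have hcase : a.val = b.val ∨ a.val + b.val = n := by unfold dmin at h; omega
  rcases hcase with h1 | h1
  · left; exact ZMod.val_injective n h1
  · right
    have h2 : ((a.val + b.val : ℕ) : ZMod n) = 0 := by rw [h1, ZMod.natCast_self]
    push_cast at h2
    rw [ZMod.natCast_rightInverse a, ZMod.natCast_rightInverse b] at h2
    exact eq_neg_of_add_eq_zero_left h2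

lemma cycle_exists_walk (hn : 3 ≤ n) (x : ZMod n) (m : ℕ) :
    ∃ w : (zmodCycleGraph n).Walk x (x + (m : ZMod n)), w.length = m := by
  induction m with
  | zero => exact ⟨Walk.nil.copy rfl (by push_cast; ring), by simp⟩
  | succ m ih =>
    obtain ⟨w, hw⟩ := ih
    have h1 : ((1 : ℕ) : ZMod n) ≠ 0 := by
      rw [Ne, ZMod.natCast_eq_zero_iff]
      exact fun h => by have := Nat.le_of_dvd one_pos h; omega
    have hadj : (zmodCycleGraph n).Adj (x + (m : ZMod n)) (x + ((m + 1 : ℕ) : ZMod n)) := by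
      show _ ≠ _ ∧ (_ - _ = 1 ∨ _ - _ = 1)
      refine ⟨fun h => h1 ?_, Or.inr (by push_cast; ring)⟩
      have h2 := add_left_cancel h
      push_cast at h2 ⊢
      linear_combination -h2
    exact ⟨w.concat hadj, by simp [hw]⟩

lemma cycle_preconnected (hn : 3 ≤ n) : (zmodCycleGraph n).Preconnected := by
  intro x y
  obtain ⟨w, -⟩ := cycle_exists_walk hn x ((y - x).val)
  rw [ZMod.natCast_rightInverse (y - x)] at w
  exact ⟨w.copy rfl (by ring)⟩

lemma cycle_connected (hn : 3 ≤ n) : (zmodCycleGraph n).Connected :=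
  haveI : Nonempty (ZMod n) := ⟨0⟩
  SimpleGraph.Connected.mk (cycle_preconnected hn)

lemma cycle_walk_lower (hn : 3 ≤ n) {x y : ZMod n} (p : (zmodCycleGraph n).Walk x y) :
    dmin n (x - y) ≤ p.length := by
  induction p with
  | nil => simp [dmin]
  | @cons a b c h p ih =>
    have hab : dmin n (a - b) = 1 := by
      rcases (show a ≠ b ∧ (a - b = 1 ∨ b - a = 1) from h).2 with h' | h'
      · rw [h', dmin_one (by omega)]
      · have : a - b = -(1 : ZMod n) := by linear_combination -h'
        rw [this, dmin_neg, dmin_one (by omega)]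
    have h2 := dmin_add_le (a - b) (b - c)
    rw [sub_add_sub_cancel] at h2
    simp only [Walk.length_cons]
    omega

lemma cycle_dist (hn : 3 ≤ n) (x y : ZMod n) :
    (zmodCycleGraph n).dist x y = dmin n (x - y) := by
  refine le_antisymm ?_ ?_
  · obtain ⟨w1, hw1⟩ := cycle_exists_walk hn x ((y - x).val)
    obtain ⟨w2, hw2⟩ := cycle_exists_walk hn y ((x - y).val)
    have e1 : x + (((y - x).val : ℕ) : ZMod n) = y := by
      rw [ZMod.natCast_rightInverse (y - x)]; ring
    have e2 : y + (((x - y).val : ℕ) : ZMod n) = x := by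
      rw [ZMod.natCast_rightInverse (x - y)]; ring
    have d1 : (zmodCycleGraph n).dist x y ≤ (y - x).val := by
      have := SimpleGraph.dist_le (w1.copy rfl e1)
      rwa [Walk.length_copy, hw1] at this
    have d2 : (zmodCycleGraph n).dist x y ≤ (x - y).val := by
      have := SimpleGraph.dist_le (w2.copy rfl e2)
      rw [SimpleGraph.dist_comm]
      rwa [Walk.length_copy, hw2] at this
    have h := val_add_cases (x - y) (y - x)
    have h0 : (x - y) + (y - x) = 0 := by ring
    rw [h0, ZMod.val_zero] at h
    have := (x - y).val_lt
    unfold dmin; omega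
  · have hr : (zmodCycleGraph n).Reachable x y := cycle_preconnected hn x y
    obtain ⟨p, hp⟩ := hr.exists_walk_length_eq_dist
    rw [← hp]
    exact cycle_walk_lower hn p

lemma cycle_mh (hn : 3 ≤ n) : IsMetricallyHomogeneous (zmodCycleGraph n) := by
  refine ⟨cycle_connected hn, ?_⟩
  intro s f hf
  by_cases hs : s.Nonempty
  · obtain ⟨a, ha⟩ := hs
    have key : ∀ x ∈ s, ∀ y ∈ s, f x - f y = x - y ∨ f x - f y = -(x - y) := by
      intro x hx y hy
      apply eq_or_eq_neg_of_dmin_eq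
      have := hf x hx y hy
      rwa [cycle_dist hn, cycle_dist hn] at this
    have main : (∀ x ∈ s, f x = x + (f a - a)) ∨ (∀ x ∈ s, f x = (f a + a) - x) := by
      by_cases hall : ∀ x ∈ s, x - a = -(x - a)
      · left; intro x hx
        rcases key x hx a ha with h | h
        · linear_combination h
        · linear_combination h - hall x hx
      · push_neg at hall; obtain ⟨b, hb, h2b⟩ := hall
        rcases key b hb a ha with hbp | hbm
        · left; intro x hx
          rcases key x hx a ha with h | h
          · linear_combination h
          · by_cases h2 : x - a = -(x - a)
            · linear_combination h - h2
            · exfalso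
              rcases key x hx b hb with h3 | h3
              · exact h2 (by linear_combination h - hbp - h3)
              · exact h2b (by linear_combination h - hbp - h3)
        · right; intro x hx
          rcases key x hx a ha with h | h
          · by_cases h2 : x - a = -(x - a)
            · linear_combination h + h2
            · exfalso
              rcases key x hx b hb with h3 | h3
              · exact h2b (by linear_combination hbm + h3 - h)
              · exact h2 (by linear_combination h3 + hbm - h)
          · linear_combination h
    rcases main with hm | hm
    · refine ⟨Equiv.addRight (f a - a), ?_, ?_⟩
      · intro x y
        rw [cycle_dist hn, cycle_dist hn]
        simp only [Equiv.coe_addRight]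
        congr 1; ring
      · intro x hx
        simp only [Equiv.coe_addRight]
        rw [hm x hx]
    · refine ⟨Equiv.subLeft (f a + a), ?_, ?_⟩
      · intro x y
        rw [cycle_dist hn, cycle_dist hn]
        simp only [Equiv.subLeft_apply]
        have h4 : (f a + a - x) - (f a + a - y) = -(x - y) := by ring
        rw [h4, dmin_neg]
      · intro x hx
        simp only [Equiv.subLeft_apply]
        rw [hm x hx]
  · exact ⟨Equiv.refl _, fun x y => rfl, fun x hx => absurd ⟨x, hx⟩ hs⟩

section Comap
variable {V : Type*} (e : V ≃ V) (G : SimpleGraph V)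

/-- hom from the comap to the graph -/
def comapHomTo : G.comap e →g G := ⟨e, fun h => h⟩

def comapHomFrom : G →g G.comap e :=
  ⟨e.symm, fun {a b} h => by simpa [SimpleGraph.comap] using h⟩

lemma reachable_comap {x y : V} (h : G.Reachable (e x) (e y)) : (G.comap e).Reachable x y := by
  obtain ⟨p⟩ := h
  exact ⟨(p.map (comapHomFrom e G)).copy (e.symm_apply_apply x) (e.symm_apply_apply y)⟩

lemma dist_comap (x y : V) : (G.comap e).dist x y = G.dist (e x) (e y) := by
  by_cases h : G.Reachable (e x) (e y)
  · have h' : (G.comap e).Reachable x y := reachable_comap e G h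
    refine le_antisymm ?_ ?_
    · obtain ⟨p, hp⟩ := h.exists_walk_length_eq_dist
      have := SimpleGraph.dist_le
        ((p.map (comapHomFrom e G)).copy (e.symm_apply_apply x) (e.symm_apply_apply y))
      exact this.trans ((Walk.length_copy _ _ _).trans ((Walk.length_map _ _).trans hp)).le
    · obtain ⟨p, hp⟩ := h'.exists_walk_length_eq_dist
      have := SimpleGraph.dist_le (p.map (comapHomTo e G))
      rwa [Walk.length_map, hp] at this
  · have h' : ¬ (G.comap e).Reachable x y := fun hr => h (by
      obtain ⟨p⟩ := hr; exact ⟨p.map (comapHomTo e G)⟩)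
    rw [SimpleGraph.dist_eq_zero_of_not_reachable h,
      SimpleGraph.dist_eq_zero_of_not_reachable h']

lemma mh_comap (h : IsMetricallyHomogeneous G) : IsMetricallyHomogeneous (G.comap e) := by
  obtain ⟨hconn, hext⟩ := h
  haveI := hconn.nonempty
  constructor
  · exact SimpleGraph.Connected.mk (fun x y => reachable_comap e G (hconn.preconnected (e x) (e y)))
  · intro s f hf
    classical
    obtain ⟨g, hg1, hg2⟩ := hext (s.image e) (e ∘ f ∘ e.symm) (by
      intro x hx y hy
      simp only [Finset.mem_image] at hx hy
      obtain ⟨x0, hx0, rfl⟩ := hx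
      obtain ⟨y0, hy0, rfl⟩ := hy
      simp only [Function.comp_apply, e.symm_apply_apply]
      rw [← dist_comap e G, ← dist_comap e G]
      exact hf x0 hx0 y0 hy0)
    refine ⟨(e.trans g).trans e.symm, ?_, ?_⟩
    · intro x y
      simp only [Equiv.trans_apply]
      rw [dist_comap e G, dist_comap e G, e.apply_symm_apply, e.apply_symm_apply]
      exact hg1 (e x) (e y)
    · intro x hx
      simp only [Equiv.trans_apply]
      rw [hg2 (e x) (Finset.mem_image_of_mem e hx)]
      simp [e.symm_apply_apply]

end Comap

end TwistAux

open TwistAux in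
/-- the twists of the `n`-cycle (`n ≥ 3`) are exactly the maps
`μ_k : i ↦ ±ki (mod n)` for `k` a unit modulo `n`. -/
theorem twists_of_cycle (n : ℕ) (hn : 3 ≤ n) (σ : Equiv.Perm ℕ)
    (hperm : ∀ i ∈ Finset.Icc 1 (n / 2), σ i ∈ Finset.Icc 1 (n / 2)) :
    (∃ H : SimpleGraph (ZMod n), IsMetricallyHomogeneous H ∧
        ∀ x y : ZMod n, x ≠ y → H.dist x y = σ ((zmodCycleGraph n).dist x y)) ↔
    (∃ k : ℕ, Nat.gcd k n = 1 ∧ ∀ i ∈ Finset.Icc 1 (n / 2),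
        ((σ i : ZMod n) = (k : ZMod n) * (i : ZMod n) ∨
         (σ i : ZMod n) = -((k : ZMod n) * (i : ZMod n)))) := by
  haveI : NeZero n := ⟨by omega⟩
  haveI : Fact (1 < n) := ⟨by omega⟩
  constructor
  · rintro ⟨H, ⟨hconn, -⟩, hdist⟩
    -- find j with σ j = 1
    have himg : Finset.image σ (Finset.Icc 1 (n / 2)) = Finset.Icc 1 (n / 2) := by
      apply Finset.eq_of_subset_of_card_le
      · exact Finset.image_subset_iff.mpr hperm
      · rw [Finset.card_image_of_injective _ σ.injective]
    have h1mem : (1 : ℕ) ∈ Finset.Icc 1 (n / 2) := by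
      simp only [Finset.mem_Icc]; omega
    rw [← himg, Finset.mem_image] at h1mem
    obtain ⟨j, hj, hσj⟩ := h1mem
    have hjlt : j < n := by simp only [Finset.mem_Icc] at hj; omega
    have hj0 : (j : ZMod n) ≠ 0 := by
      rw [Ne, ZMod.natCast_eq_zero_iff]
      intro h
      have := Nat.le_of_dvd (by simp only [Finset.mem_Icc] at hj; omega) h
      omega
    -- adjacency characterization of H
    have hadj : ∀ x y : ZMod n, H.Adj x y ↔
        (x - y = (j : ZMod n) ∨ y - x = (j : ZMod n)) := by
      intro x y
      rw [← SimpleGraph.dist_eq_one_iff_adj]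
      constructor
      · intro h1
        have hxy : x ≠ y := by
          rintro rfl; rw [SimpleGraph.dist_self] at h1; omega
        rw [hdist x y hxy] at h1
        have hd : (zmodCycleGraph n).dist x y = j := σ.injective (h1.trans hσj.symm)
        rw [cycle_dist hn] at hd
        rcases dmin_cast (x - y) with h2 | h2 <;> rw [hd] at h2
        · exact Or.inl h2.symm
        · exact Or.inr (by linear_combination -h2)
      · intro h1
        have hxy : x ≠ y := by
          rintro rfl
          apply hj0
          rcases h1 with h | h <;> linear_combination -h
        rw [hdist x y hxy, cycle_dist hn]
        have hd : dmin n (x - y) = j := by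
          apply rep_unique (dmin_mem _ (sub_ne_zero.mpr hxy)) hj
          rcases dmin_cast (x - y) with h2 | h2 <;> rcases h1 with h3 | h3
          · exact Or.inl (by rw [h2, h3])
          · exact Or.inr (by rw [h2]; linear_combination -h3)
          · exact Or.inr (by rw [h2, h3])
          · exact Or.inl (by rw [h2]; linear_combination h3)
        rw [hd, hσj]
    -- connectivity gives that j is a unit
    have hgen : ∀ x y : ZMod n, H.Reachable x y → ∃ m : ℤ, x - y = (m : ZMod n) * (j : ZMod n) := by
      intro x y hr
      obtain ⟨p⟩ := hr
      induction p with
      | nil => exact ⟨0, by simp⟩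
      | @cons u v w h p ih =>
        obtain ⟨m, hm⟩ := ih
        rcases (hadj u v).mp h with h' | h'
        · exact ⟨m + 1, by push_cast; linear_combination hm + h'⟩
        · exact ⟨m - 1, by push_cast; linear_combination hm - h'⟩
    obtain ⟨m, hm⟩ := hgen 1 0 (hconn.preconnected 1 0)
    have hju : IsUnit ((j : ℕ) : ZMod n) :=
      IsUnit.of_mul_eq_one (m : ZMod n) (by linear_combination -hm)
    set u := hju.unit with hu
    have huj : (u : ZMod n) = (j : ZMod n) := hju.unit_spec
    refine ⟨((u⁻¹ : (ZMod n)ˣ) : ZMod n).val, ZMod.val_coe_unit_coprime u⁻¹, ?_⟩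
    intro i hi
    have hilt : i < n := by simp only [Finset.mem_Icc] at hi; omega
    have hin : (i : ZMod n) ≠ 0 := by
      rw [Ne, ZMod.natCast_eq_zero_iff]
      intro h
      have := Nat.le_of_dvd (by simp only [Finset.mem_Icc] at hi; omega) h
      omega
    -- H is the comap of the cycle under multiplication by u⁻¹
    let e : ZMod n ≃ ZMod n :=
      ⟨fun x => ((u⁻¹ : (ZMod n)ˣ) : ZMod n) * x, fun x => (u : ZMod n) * x,
       fun x => by dsimp only; rw [← mul_assoc, ← Units.val_mul, mul_inv_cancel, Units.val_one, one_mul],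
       fun x => by dsimp only; rw [← mul_assoc, ← Units.val_mul, inv_mul_cancel, Units.val_one, one_mul]⟩
    have heq : H = (zmodCycleGraph n).comap e := by
      ext x y
      rw [hadj]
      show _ ↔ (zmodCycleGraph n).Adj (e x) (e y)
      show _ ↔ (e x ≠ e y ∧ (e x - e y = 1 ∨ e y - e x = 1))
      have hone : (1 : ZMod n) ≠ 0 := one_ne_zero
      have hiu : ((u⁻¹ : (ZMod n)ˣ) : ZMod n) * (u : ZMod n) = 1 := Units.inv_mul u
      constructor
      · rintro (h | h)
        · refine ⟨?_, Or.inl ?_⟩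
          · intro hxy
            apply hj0
            have : x = y := e.injective hxy
            rw [this] at h; linear_combination -h
          · show ((u⁻¹ : (ZMod n)ˣ) : ZMod n) * x - ((u⁻¹ : (ZMod n)ˣ) : ZMod n) * y = 1
            linear_combination ((u⁻¹ : (ZMod n)ˣ) : ZMod n) * h -
              ((u⁻¹ : (ZMod n)ˣ) : ZMod n) * huj + hiu
        · refine ⟨?_, Or.inr ?_⟩
          · intro hxy
            apply hj0
            have : x = y := e.injective hxy
            rw [this] at h; linear_combination -h
          · show ((u⁻¹ : (ZMod n)ˣ) : ZMod n) * y - ((u⁻¹ : (ZMod n)ˣ) : ZMod n) * x = 1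
            linear_combination ((u⁻¹ : (ZMod n)ˣ) : ZMod n) * h -
              ((u⁻¹ : (ZMod n)ˣ) : ZMod n) * huj + hiu
      · rintro ⟨-, h | h⟩
        · left
          replace h : ((u⁻¹ : (ZMod n)ˣ) : ZMod n) * x - ((u⁻¹ : (ZMod n)ˣ) : ZMod n) * y = 1 := h
          have hmul : (u : ZMod n) * ((u⁻¹ : (ZMod n)ˣ) : ZMod n) = 1 := Units.mul_inv u
          linear_combination (u : ZMod n) * h - (x - y) * hmul + huj
        · right
          replace h : ((u⁻¹ : (ZMod n)ˣ) : ZMod n) * y - ((u⁻¹ : (ZMod n)ˣ) : ZMod n) * x = 1 := h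
          have hmul : (u : ZMod n) * ((u⁻¹ : (ZMod n)ˣ) : ZMod n) = 1 := Units.mul_inv u
          linear_combination (u : ZMod n) * h - (y - x) * hmul + huj
    -- compute σ i
    have hd0 : (zmodCycleGraph n).dist (i : ZMod n) 0 = i := by
      rw [cycle_dist hn, sub_zero]
      have : ((i : ZMod n)).val = i := ZMod.val_cast_of_lt hilt
      simp only [dmin, this]
      simp only [Finset.mem_Icc] at hi
      omega
    have hσi : σ i = dmin n (((u⁻¹ : (ZMod n)ˣ) : ZMod n) * (i : ZMod n)) := by
      have h1 := hdist (i : ZMod n) 0 hin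
      rw [hd0] at h1
      rw [← h1, heq, dist_comap, cycle_dist hn]
      show dmin n (((u⁻¹ : (ZMod n)ˣ) : ZMod n) * (i : ZMod n) -
        ((u⁻¹ : (ZMod n)ˣ) : ZMod n) * 0) = _
      rw [mul_zero, sub_zero]
    have hk : ((((u⁻¹ : (ZMod n)ˣ) : ZMod n).val : ℕ) : ZMod n) = ((u⁻¹ : (ZMod n)ˣ) : ZMod n) :=
      ZMod.natCast_rightInverse _
    rw [hσi, hk]
    exact dmin_cast _
  · rintro ⟨k, hk, hσ⟩
    set u := ZMod.unitOfCoprime k hk with hu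
    have huk : (u : ZMod n) = (k : ZMod n) := ZMod.coe_unitOfCoprime k hk
    let e : ZMod n ≃ ZMod n :=
      ⟨fun x => (u : ZMod n) * x, fun x => ((u⁻¹ : (ZMod n)ˣ) : ZMod n) * x,
       fun x => by dsimp only; rw [← mul_assoc, ← Units.val_mul, inv_mul_cancel, Units.val_one, one_mul],
       fun x => by dsimp only; rw [← mul_assoc, ← Units.val_mul, mul_inv_cancel, Units.val_one, one_mul]⟩
    refine ⟨(zmodCycleGraph n).comap e, mh_comap e _ (cycle_mh hn), ?_⟩
    intro x y hxy
    rw [dist_comap, cycle_dist hn, cycle_dist hn]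
    have hex : e x - e y = (u : ZMod n) * (x - y) := by
      show (u : ZMod n) * x - (u : ZMod n) * y = _; ring
    rw [hex]
    set i := dmin n (x - y) with hi
    have himem : i ∈ Finset.Icc 1 (n / 2) := dmin_mem _ (sub_ne_zero.mpr hxy)
    have hic := dmin_cast (x - y)
    rw [← hi] at hic
    have hσ2 := hσ i himem
    have hnz : (u : ZMod n) * (x - y) ≠ 0 := by
      intro h
      apply sub_ne_zero.mpr hxy
      have hiu : ((u⁻¹ : (ZMod n)ˣ) : ZMod n) * (u : ZMod n) = 1 := Units.inv_mul u
      linear_combination ((u⁻¹ : (ZMod n)ˣ) : ZMod n) * h - (x - y) * hiu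
    symm
    apply rep_unique (hperm i himem) (dmin_mem _ hnz)
    have hdc := dmin_cast ((u : ZMod n) * (x - y))
    rcases hdc with h1 | h1 <;> rcases hic with h3 | h3 <;> rcases hσ2 with h2 | h2
    · exact Or.inl (by linear_combination h2 - h1 + (k : ZMod n) * h3 - (x - y) * huk)
    · exact Or.inr (by linear_combination h2 + h1 - (k : ZMod n) * h3 + (x - y) * huk)
    · exact Or.inr (by linear_combination h2 + h1 + (k : ZMod n) * h3 + (x - y) * huk)
    · exact Or.inl (by linear_combination h2 - h1 - (k : ZMod n) * h3 - (x - y) * huk)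
    · exact Or.inr (by linear_combination h2 + h1 + (k : ZMod n) * h3 - (x - y) * huk)
    · exact Or.inl (by linear_combination h2 - h1 - (k : ZMod n) * h3 + (x - y) * huk)
    · exact Or.inl (by linear_combination h2 - h1 + (k : ZMod n) * h3 + (x - y) * huk)
    · exact Or.inr (by linear_combination h2 + h1 - (k : ZMod n) * h3 - (x - y) * huk)
end

section
/- Let Γ be a metrically homogeneous antipodal graph of diameter 3. If Γ is not bipartite, then the transposition σ = (1,2) is the unique non-trivial permutation of {1,2,3} for which Γ^σ is metrically homogeneous. If Γ is bipartite, then no non-trivial such permutation exists. -/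
open SimpleGraph

section AuxLemmas

open SimpleGraph

variable {V : Type*} {G : SimpleGraph V}

private lemma aux_step (hc : G.Connected) {x y : V} {n : ℕ} (h : G.dist x y = n + 1) :
    ∃ z, G.Adj x z ∧ G.dist z y = n := by
  obtain ⟨p, hp⟩ := hc.exists_walk_length_eq_dist x y
  rw [h] at hp
  cases p with
  | nil => simp at hp
  | cons hadj q =>
    rename_i z
    have h1 : G.dist x z = 1 := dist_eq_one_iff_adj.mpr hadj
    have h2 : G.dist z y ≤ n := by
      have := dist_le q
      simp [Walk.length_cons] at hp
      omega
    have h3 := hc.dist_triangle (u := x) (v := z) (w := y)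
    exact ⟨z, hadj, by omega⟩

private lemma aux_ne {x y : V} {n : ℕ} (h : G.dist x y = n) (hn : n ≠ 0) : x ≠ y := by
  rintro rfl; rw [SimpleGraph.dist_self] at h; omega

private lemma aux_transfer (hG : IsMetricallyHomogeneous G) {a b c e : V}
    (h : G.dist a b = G.dist c e) :
    ∃ g : V ≃ V, (∀ x y : V, G.dist (g x) (g y) = G.dist x y) ∧ g a = c ∧ g b = e := by
  classical
  by_cases hba : b = a
  · subst hba
    have hce : c = e := (hG.1.dist_eq_zero_iff).mp (by rw [← h, SimpleGraph.dist_self])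
    obtain ⟨g, hg, hgs⟩ := hG.2 {b} (fun _ => c) (by
      intro x hx y hy
      simp only [Finset.mem_singleton] at hx hy
      subst hx; subst hy; simp [SimpleGraph.dist_self])
    exact ⟨g, hg, by rw [hgs b (by simp)], by rw [hgs b (by simp), hce]⟩
  · obtain ⟨g, hg, hgs⟩ := hG.2 {a, b} (fun v => if v = a then c else e) (by
      intro x hx y hy
      simp only [Finset.mem_insert, Finset.mem_singleton] at hx hy
      rcases hx with rfl | rfl <;> rcases hy with rfl | rfl <;>
        simp [hba, SimpleGraph.dist_self, ← h, SimpleGraph.dist_comm])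
    refine ⟨g, hg, ?_, ?_⟩
    · rw [hgs a (by simp)]; simp
    · rw [hgs b (by simp)]; simp [hba]

/-- The antipode of a vertex. -/
private noncomputable def antipode (hant : IsAntipodal G 3) (v : V) : V :=
  (hant v).choose

private lemma antipode_dist (hant : IsAntipodal G 3) (v : V) :
    G.dist v (antipode hant v) = 3 :=
  (hant v).choose_spec.1

private lemma antipode_unique (hant : IsAntipodal G 3) {v w : V}
    (h : G.dist v w = 3) : w = antipode hant v :=
  (hant v).choose_spec.2 w h

private lemma antipode_invol (hant : IsAntipodal G 3) (v : V) :
    antipode hant (antipode hant v) = v :=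
  (antipode_unique hant (by rw [SimpleGraph.dist_comm]; exact antipode_dist hant v)).symm

/-- The antipodal law: `d(a, b') = 3 - d(a, b)`. -/
private lemma aux_law (hG : IsMetricallyHomogeneous G) (hdiam : HasDiameter G 3)
    (hant : IsAntipodal G 3) (a b : V) :
    G.dist a (antipode hant b) = 3 - G.dist a b := by
  have hc := hG.1
  have hub := hdiam.1
  have hd : G.dist a b ≤ 3 := hub a b
  have h0 : G.dist b (antipode hant b) = 3 := antipode_dist hant b
  rcases (by omega : G.dist a b = 0 ∨ G.dist a b = 1 ∨ G.dist a b = 2 ∨ G.dist a b = 3)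
    with h | h | h | h
  · have hab : a = b := hc.dist_eq_zero_iff.mp h
    subst hab; rw [h, h0]
  · have hge : 2 ≤ G.dist a (antipode hant b) := by
      have ht := hc.dist_triangle (u := b) (v := a) (w := antipode hant b)
      rw [SimpleGraph.dist_comm (u := b) (v := a)] at ht; omega
    have hle := hub a (antipode hant b)
    have hne3 : G.dist a (antipode hant b) ≠ 3 := by
      intro h3
      have h4 : antipode hant b = antipode hant a := antipode_unique hant h3
      have h5 : b = a := by
        have := congrArg (antipode hant) h4
        rwa [antipode_invol, antipode_invol] at this
      subst h5; rw [SimpleGraph.dist_self] at h; omega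
    omega
  · obtain ⟨u, hu1, hu2⟩ := aux_step hc
      (show G.dist (antipode hant b) b = 2 + 1 by rw [SimpleGraph.dist_comm]; exact h0)
    obtain ⟨g, hg, hga, hgb⟩ := aux_transfer hG (hu2.trans h.symm)
    have hgA : g (antipode hant b) = antipode hant b := by
      have h3 : G.dist (g b) (g (antipode hant b)) = 3 := by
        rw [hg]; exact h0
      have h4 := antipode_unique hant h3
      rwa [hgb] at h4
    have h4 : G.dist a (antipode hant b) = 1 := by
      rw [← hga, ← hgA, hg, SimpleGraph.dist_comm]
      exact dist_eq_one_iff_adj.mpr hu1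
    omega
  · have hba : b = antipode hant a := antipode_unique hant h
    have : antipode hant b = a := by rw [hba, antipode_invol]
    rw [this, SimpleGraph.dist_self, h]

private lemma aux_tri122 (hG : IsMetricallyHomogeneous G)
    (htri : ∃ a b c : V, G.dist a b = 1 ∧ G.dist a c = 2 ∧ G.dist b c = 2)
    {x y : V} (hxy : G.dist x y = 1) : ∃ z, G.dist x z = 2 ∧ G.dist y z = 2 := by
  obtain ⟨a, b, c, h1, h2, h3⟩ := htri
  obtain ⟨g, hg, hga, hgb⟩ := aux_transfer hG (h1.trans hxy.symm)
  exact ⟨g c, by rw [← hga, hg]; exact h2, by rw [← hgb, hg]; exact h3⟩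

private lemma aux_even (hc : G.Connected) {f : V → Bool} (hf : ∀ x y, G.Adj x y → f x ≠ f y)
    {a b : V} (h : G.dist a b = 2) : f a = f b := by
  obtain ⟨z, hz1, hz2⟩ := aux_step hc (show G.dist a b = 1 + 1 from h)
  have hz2' : G.Adj z b := dist_eq_one_iff_adj.mp hz2
  have e1 := hf a z hz1
  have e2 := hf z b hz2'
  cases hfa : f a <;> cases hfz : f z <;> cases hfb : f b <;> simp_all

private lemma aux_bip_no122 (hc : G.Connected) (hbip : IsBipartiteGraph G) :
    ¬ ∃ a b c : V, G.dist a b = 1 ∧ G.dist a c = 2 ∧ G.dist b c = 2 := by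
  rintro ⟨a, b, c, h1, h2, h3⟩
  obtain ⟨f, hf⟩ := hbip
  have e1 := aux_even hc hf h2
  have e2 := aux_even hc hf h3
  have e3 := hf a b (dist_eq_one_iff_adj.mp h1)
  rw [e1, e2] at e3
  exact e3 rfl

private lemma aux_nonbip_122 (hG : IsMetricallyHomogeneous G) (hdiam : HasDiameter G 3)
    (hant : IsAntipodal G 3) (hnb : ¬ IsBipartiteGraph G) :
    ∃ a b c : V, G.dist a b = 1 ∧ G.dist a c = 2 ∧ G.dist b c = 2 := by
  have hc := hG.1
  have hub := hdiam.1
  by_contra hno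
  push_neg at hno
  apply hnb
  obtain ⟨x0, y0, _⟩ := hdiam.2
  refine ⟨fun v => decide (Even (G.dist x0 v)), ?_⟩
  intro x y hadj
  have hxy : G.dist x y = 1 := dist_eq_one_iff_adj.mpr hadj
  have t1 := hc.dist_triangle (u := x0) (v := x) (w := y)
  have t2 := hc.dist_triangle (u := x0) (v := y) (w := x)
  rw [SimpleGraph.dist_comm (u := y) (v := x)] at t2
  have hbx := hub x0 x
  have hby := hub x0 y
  have hne' : G.dist x0 x ≠ G.dist x0 y := by
    intro hpq
    rcases (by omega : G.dist x0 x = 0 ∨ G.dist x0 x = 1 ∨ G.dist x0 x = 2 ∨ G.dist x0 x = 3)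
      with h | h | h | h
    · have hx' : x0 = x := hc.dist_eq_zero_iff.mp h
      have hy' : x0 = y := hc.dist_eq_zero_iff.mp (by omega)
      have hxy' : x = y := hx'.symm.trans hy'
      rw [hxy', SimpleGraph.dist_self] at hxy; omega
    · -- (1,1,1) triangle x0, x, y; push to (1,2,2) by antipode of y
      have l1 : G.dist x0 (antipode hant y) = 2 := by
        rw [aux_law hG hdiam hant]; omega
      have l2 : G.dist x (antipode hant y) = 2 := by
        rw [aux_law hG hdiam hant]; omega
      exact hno x0 x (antipode hant y) h l1 l2
    · exact hno x y x0 hxy (by rwa [SimpleGraph.dist_comm]) (by rw [SimpleGraph.dist_comm]; omega)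
    · have hx' : x = antipode hant x0 := antipode_unique hant h
      have hy' : y = antipode hant x0 := antipode_unique hant (by omega)
      have hxy' : x = y := hx'.trans hy'.symm
      rw [hxy', SimpleGraph.dist_self] at hxy; omega
  simp only [ne_eq, decide_eq_decide]
  rcases (by omega : G.dist x0 y = G.dist x0 x + 1 ∨ G.dist x0 x = G.dist x0 y + 1)
    with h | h
  · rw [h, Nat.even_add_one]; tauto
  · rw [h, Nat.even_add_one]; tauto

end AuxLemmas
section Construction

open SimpleGraph

variable {V : Type*} {G : SimpleGraph V}

private lemma aux_construct (hG : IsMetricallyHomogeneous G) (hdiam : HasDiameter G 3)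
    (hant : IsAntipodal G 3)
    (htri : ∃ a b c : V, G.dist a b = 1 ∧ G.dist a c = 2 ∧ G.dist b c = 2) :
    ∃ H : SimpleGraph V, IsMetricallyHomogeneous H ∧
      (∀ x y : V, G.dist x y = 1 → H.dist x y = 2) ∧
      (∀ x y : V, G.dist x y = 2 → H.dist x y = 1) ∧
      (∀ x y : V, G.dist x y = 3 → H.dist x y = 3) := by
  classical
  have hc := hG.1
  have hub := hdiam.1
  let H : SimpleGraph V :=
    { Adj := fun x y => G.dist x y = 2,
      symm := ⟨fun x y h => by
        change G.dist y x = 2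
        change G.dist x y = 2 at h
        rwa [SimpleGraph.dist_comm (u := y) (v := x)]⟩,
      loopless := ⟨fun x h => by
        change G.dist x x = 2 at h
        rw [SimpleGraph.dist_self] at h; omega⟩ }
  have hAdj : ∀ x y : V, H.Adj x y ↔ G.dist x y = 2 := fun x y => Iff.rfl
  have hwalk1 : ∀ x y : V, G.dist x y = 1 → ∃ p : H.Walk x y, p.length = 2 := by
    intro x y h
    obtain ⟨z, hz1, hz2⟩ := aux_tri122 hG htri h
    exact ⟨Walk.cons ((hAdj x z).mpr hz1)
      (Walk.cons ((hAdj z y).mpr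
        (by rw [SimpleGraph.dist_comm (u := z) (v := y)]; exact hz2)) Walk.nil), by simp⟩
  have hwalk3 : ∀ x y : V, G.dist x y = 3 → ∃ p : H.Walk x y, p.length = 3 := by
    intro x y h
    obtain ⟨q, hq, hqy⟩ := aux_step hc (show G.dist x y = 2 + 1 from h)
    have hq1 : G.dist x q = 1 := dist_eq_one_iff_adj.mpr hq
    obtain ⟨p, hp1, hp2⟩ := aux_tri122 hG htri hq1
    exact ⟨Walk.cons ((hAdj x p).mpr hp1)
      (Walk.cons ((hAdj p q).mpr
        (by rw [SimpleGraph.dist_comm (u := p) (v := q)]; exact hp2))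
      (Walk.cons ((hAdj q y).mpr hqy) Walk.nil)), by simp⟩
  obtain ⟨x0, y0, hx0⟩ := hdiam.2
  have hHconn : H.Connected := by
    have : Nonempty V := ⟨x0⟩
    refine SimpleGraph.Connected.mk fun x y => ?_
    rcases (by have := hub x y; omega :
        G.dist x y = 0 ∨ G.dist x y = 1 ∨ G.dist x y = 2 ∨ G.dist x y = 3) with h | h | h | h
    · rw [hc.dist_eq_zero_iff.mp h]
    · exact ⟨(hwalk1 x y h).choose⟩
    · exact ⟨Walk.cons ((hAdj x y).mpr h) Walk.nil⟩
    · exact ⟨(hwalk3 x y h).choose⟩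
  have h2 : ∀ x y : V, G.dist x y = 2 → H.dist x y = 1 :=
    fun x y h => dist_eq_one_iff_adj.mpr ((hAdj x y).mpr h)
  have h1 : ∀ x y : V, G.dist x y = 1 → H.dist x y = 2 := by
    intro x y h
    obtain ⟨p, hp⟩ := hwalk1 x y h
    have hle : H.dist x y ≤ 2 := by have := dist_le p; omega
    have hpos : 0 < H.dist x y := hHconn.pos_dist_of_ne (aux_ne h one_ne_zero)
    have hne1 : H.dist x y ≠ 1 := by
      intro h1'
      have := (hAdj x y).mp (dist_eq_one_iff_adj.mp h1')
      omega
    omega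
  have h3 : ∀ x y : V, G.dist x y = 3 → H.dist x y = 3 := by
    intro x y h
    obtain ⟨p, hp⟩ := hwalk3 x y h
    have hle : H.dist x y ≤ 3 := by have := dist_le p; omega
    have hpos : 0 < H.dist x y := hHconn.pos_dist_of_ne (aux_ne h (by omega))
    have hne1 : H.dist x y ≠ 1 := by
      intro h1'
      have := (hAdj x y).mp (dist_eq_one_iff_adj.mp h1')
      omega
    have hne2 : H.dist x y ≠ 2 := by
      intro h2'
      obtain ⟨w, hw1, hw2⟩ := aux_step hHconn (show H.dist x y = 1 + 1 from h2')
      have hw1' : G.dist x w = 2 := (hAdj x w).mp hw1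
      have hw2' : G.dist w y = 2 := (hAdj w y).mp (dist_eq_one_iff_adj.mp hw2)
      have hxy : y = antipode hant x := antipode_unique hant h
      have hlaw := aux_law hG hdiam hant w x
      rw [← hxy] at hlaw
      rw [SimpleGraph.dist_comm (u := w) (v := x)] at hlaw
      omega
    omega
  have key : ∀ x y : V, H.dist x y =
      (if G.dist x y = 1 then 2 else if G.dist x y = 2 then 1 else
        if G.dist x y = 3 then 3 else 0) := by
    intro x y
    by_cases hxy : x = y
    · subst hxy; simp [SimpleGraph.dist_self]
    · have hpos : 0 < G.dist x y := hc.pos_dist_of_ne hxy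
      rcases (by have := hub x y; omega :
          G.dist x y = 1 ∨ G.dist x y = 2 ∨ G.dist x y = 3) with h | h | h
      · rw [h1 x y h]; simp [h]
      · rw [h2 x y h]; simp [h]
      · rw [h3 x y h]; simp [h]
  refine ⟨H, ⟨hHconn, ?_⟩, h1, h2, h3⟩
  intro s f hf
  have hf' : ∀ x ∈ s, ∀ y ∈ s, G.dist (f x) (f y) = G.dist x y := by
    intro x hx y hy
    have hd := hf x hx y hy
    rw [key, key] at hd
    have b1 := hub (f x) (f y)
    have b2 := hub x y
    split_ifs at hd <;> omega
  obtain ⟨g, hg, hgs⟩ := hG.2 s f hf'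
  exact ⟨g, fun x y => by rw [key, key, hg], hgs⟩

private lemma aux_decode {H : SimpleGraph V} (σ : Equiv.Perm ℕ)
    (hd : ∀ x y : V, x ≠ y → H.dist x y = σ (G.dist x y))
    {x y : V} (hadj : H.Adj x y) : σ (G.dist x y) = 1 := by
  rw [← hd x y hadj.ne]
  exact dist_eq_one_iff_adj.mpr hadj

private lemma aux_kill_321 (hG : IsMetricallyHomogeneous G) (hdiam : HasDiameter G 3)
    (hant : IsAntipodal G 3) {H : SimpleGraph V} (hH : IsMetricallyHomogeneous H)
    (σ : Equiv.Perm ℕ) (hd : ∀ x y : V, x ≠ y → H.dist x y = σ (G.dist x y))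
    (hs1 : σ 1 = 3) (hs3 : σ 3 = 1) : False := by
  obtain ⟨x0, y0, h3⟩ := hdiam.2
  obtain ⟨q, hq, _⟩ := aux_step hG.1 (show G.dist x0 y0 = 2 + 1 from h3)
  have hdq : G.dist x0 q = 1 := dist_eq_one_iff_adj.mpr hq
  have hne : x0 ≠ q := aux_ne hdq one_ne_zero
  have e1 : H.dist x0 q = 3 := by rw [hd x0 q hne, hdq, hs1]
  obtain ⟨w, hw, hw2⟩ := aux_step hH.1 (show H.dist x0 q = 2 + 1 from e1)
  have hwd : G.dist x0 w = 3 := σ.injective (by rw [aux_decode σ hd hw, hs3])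
  have hwA : w = antipode hant x0 := antipode_unique hant hwd
  obtain ⟨u, hu, hu2⟩ := aux_step hH.1 (show H.dist w q = 1 + 1 from hw2)
  have hud : G.dist w u = 3 := σ.injective (by rw [aux_decode σ hd hu, hs3])
  have huA : u = antipode hant w := antipode_unique hant hud
  rw [hwA, antipode_invol] at huA
  rw [huA] at hu2
  omega

private lemma aux_kill_231 (hG : IsMetricallyHomogeneous G) (hdiam : HasDiameter G 3)
    (hant : IsAntipodal G 3) {H : SimpleGraph V} (hH : IsMetricallyHomogeneous H)
    (σ : Equiv.Perm ℕ) (hd : ∀ x y : V, x ≠ y → H.dist x y = σ (G.dist x y))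
    (hs1 : σ 1 = 2) (hs3 : σ 3 = 1) : False := by
  obtain ⟨x0, y0, h3⟩ := hdiam.2
  obtain ⟨q, hq, _⟩ := aux_step hG.1 (show G.dist x0 y0 = 2 + 1 from h3)
  have hdq : G.dist x0 q = 1 := dist_eq_one_iff_adj.mpr hq
  have hne : x0 ≠ q := aux_ne hdq one_ne_zero
  have e1 : H.dist x0 q = 2 := by rw [hd x0 q hne, hdq, hs1]
  obtain ⟨w, hw, hw2⟩ := aux_step hH.1 (show H.dist x0 q = 1 + 1 from e1)
  have hwd : G.dist x0 w = 3 := σ.injective (by rw [aux_decode σ hd hw, hs3])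
  have hwA : w = antipode hant x0 := antipode_unique hant hwd
  have hwq : H.Adj w q := dist_eq_one_iff_adj.mp hw2
  have hqd : G.dist w q = 3 := σ.injective (by rw [aux_decode σ hd hwq, hs3])
  have hqA : q = antipode hant w := antipode_unique hant hqd
  rw [hwA, antipode_invol] at hqA
  exact hne hqA.symm

private lemma aux_kill_132 (hG : IsMetricallyHomogeneous G) (hdiam : HasDiameter G 3)
    {H : SimpleGraph V} (hH : IsMetricallyHomogeneous H)
    (σ : Equiv.Perm ℕ) (hd : ∀ x y : V, x ≠ y → H.dist x y = σ (G.dist x y))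
    (hs1 : σ 1 = 1) (hs3 : σ 3 = 2) : False := by
  obtain ⟨x0, y0, h3⟩ := hdiam.2
  have hne : x0 ≠ y0 := aux_ne h3 (by omega)
  have e1 : H.dist x0 y0 = 2 := by rw [hd x0 y0 hne, h3, hs3]
  obtain ⟨u, hu, hu2⟩ := aux_step hH.1 (show H.dist x0 y0 = 1 + 1 from e1)
  have hud : G.dist x0 u = 1 := σ.injective (by rw [aux_decode σ hd hu, hs1])
  have huy : H.Adj u y0 := dist_eq_one_iff_adj.mp hu2
  have huyd : G.dist u y0 = 1 := σ.injective (by rw [aux_decode σ hd huy, hs1])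
  have := hG.1.dist_triangle (u := x0) (v := u) (w := y0)
  omega

private lemma aux_kill_31 (hG : IsMetricallyHomogeneous G)
    {H : SimpleGraph V} (hH : IsMetricallyHomogeneous H)
    (σ : Equiv.Perm ℕ) (hd : ∀ x y : V, x ≠ y → H.dist x y = σ (G.dist x y))
    (hs1 : σ 1 = 3) (hs2 : σ 2 = 1)
    (htri : ∃ a b c : V, G.dist a b = 1 ∧ G.dist a c = 2 ∧ G.dist b c = 2) : False := by
  obtain ⟨a, b, c, t1, t2, t3⟩ := htri
  have hac : H.Adj a c := by
    rw [← dist_eq_one_iff_adj, hd a c (aux_ne t2 (by omega)), t2, hs2]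
  have hcb : H.Adj c b := by
    have t3' : G.dist c b = 2 := by
      rw [SimpleGraph.dist_comm (u := c) (v := b)]; exact t3
    rw [← dist_eq_one_iff_adj, hd c b (aux_ne t3' (by omega)), t3', hs2]
  have hle : H.dist a b ≤ 2 := by
    have := dist_le (Walk.cons hac (Walk.cons hcb Walk.nil))
    simpa using this
  have : H.dist a b = 3 := by rw [hd a b (aux_ne t1 one_ne_zero), t1, hs1]
  omega

private lemma aux_kill_21_bip (hG : IsMetricallyHomogeneous G) (hdiam : HasDiameter G 3)
    {H : SimpleGraph V} (hH : IsMetricallyHomogeneous H)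
    (σ : Equiv.Perm ℕ) (hd : ∀ x y : V, x ≠ y → H.dist x y = σ (G.dist x y))
    (hs1 : σ 1 = 2) (hs2 : σ 2 = 1) (hbip : IsBipartiteGraph G) : False := by
  obtain ⟨x0, y0, h3⟩ := hdiam.2
  obtain ⟨q, hq, _⟩ := aux_step hG.1 (show G.dist x0 y0 = 2 + 1 from h3)
  have hdq : G.dist x0 q = 1 := dist_eq_one_iff_adj.mpr hq
  have hne : x0 ≠ q := aux_ne hdq one_ne_zero
  have e1 : H.dist x0 q = 2 := by rw [hd x0 q hne, hdq, hs1]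
  obtain ⟨u, hu, hu2⟩ := aux_step hH.1 (show H.dist x0 q = 1 + 1 from e1)
  have hud : G.dist x0 u = 2 := σ.injective (by rw [aux_decode σ hd hu, hs2])
  have huq : H.Adj u q := dist_eq_one_iff_adj.mp hu2
  have huqd : G.dist u q = 2 := σ.injective (by rw [aux_decode σ hd huq, hs2])
  exact aux_bip_no122 hG.1 hbip ⟨x0, q, u, hdq, hud,
    by rw [SimpleGraph.dist_comm (u := q) (v := u)]; exact huqd⟩

private lemma aux_kill_31_bip (hG : IsMetricallyHomogeneous G) (hdiam : HasDiameter G 3)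
    {H : SimpleGraph V} (hH : IsMetricallyHomogeneous H)
    (σ : Equiv.Perm ℕ) (hd : ∀ x y : V, x ≠ y → H.dist x y = σ (G.dist x y))
    (hs1 : σ 1 = 3) (hs2 : σ 2 = 1) (hbip : IsBipartiteGraph G) : False := by
  obtain ⟨x0, y0, h3⟩ := hdiam.2
  obtain ⟨q, hq, _⟩ := aux_step hG.1 (show G.dist x0 y0 = 2 + 1 from h3)
  have hdq : G.dist x0 q = 1 := dist_eq_one_iff_adj.mpr hq
  have hne : x0 ≠ q := aux_ne hdq one_ne_zero
  have e1 : H.dist x0 q = 3 := by rw [hd x0 q hne, hdq, hs1]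
  obtain ⟨w, hw, hw2⟩ := aux_step hH.1 (show H.dist x0 q = 2 + 1 from e1)
  have hwd : G.dist x0 w = 2 := σ.injective (by rw [aux_decode σ hd hw, hs2])
  obtain ⟨u, hu, hu2⟩ := aux_step hH.1 (show H.dist w q = 1 + 1 from hw2)
  have hud : G.dist w u = 2 := σ.injective (by rw [aux_decode σ hd hu, hs2])
  have huq : H.Adj u q := dist_eq_one_iff_adj.mp hu2
  have huqd : G.dist u q = 2 := σ.injective (by rw [aux_decode σ hd huq, hs2])
  obtain ⟨f, hf⟩ := hbip
  have c1 := aux_even hG.1 hf hwd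
  have c2 := aux_even hG.1 hf hud
  have c3 := aux_even hG.1 hf huqd
  have c4 := hf x0 q hq
  rw [c1, c2, c3] at c4
  exact c4 rfl

end Construction
/-- for an antipodal metrically homogeneous graph of diameter 3,
if it is not bipartite then the transposition `(1,2)` is the unique non-trivial
twist; if it is bipartite there is no non-trivial twist. -/
theorem twists_antipodal_diameter_three {V : Type*} (G : SimpleGraph V)
    (hG : IsMetricallyHomogeneous G) (hdiam : HasDiameter G 3)
    (hant : IsAntipodal G 3) :
    (¬ IsBipartiteGraph G →
      ∀ σ : Equiv.Perm ℕ, (∀ i ∈ Finset.Icc 1 3, σ i ∈ Finset.Icc 1 3) →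
        (∃ i ∈ Finset.Icc 1 3, σ i ≠ i) →
        ((∃ H : SimpleGraph V, IsMetricallyHomogeneous H ∧
            ∀ x y : V, x ≠ y → H.dist x y = σ (G.dist x y)) ↔
          (σ 1 = 2 ∧ σ 2 = 1 ∧ σ 3 = 3))) ∧
    (IsBipartiteGraph G →
      ∀ σ : Equiv.Perm ℕ, (∀ i ∈ Finset.Icc 1 3, σ i ∈ Finset.Icc 1 3) →
        (∃ i ∈ Finset.Icc 1 3, σ i ≠ i) →
        ¬ ∃ H : SimpleGraph V, IsMetricallyHomogeneous H ∧
            ∀ x y : V, x ≠ y → H.dist x y = σ (G.dist x y)) := by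

  classical
  have hc : G.Connected := hG.1
  have hub := hdiam.1
  have hσcases : ∀ σ : Equiv.Perm ℕ, (∀ i ∈ Finset.Icc 1 3, σ i ∈ Finset.Icc 1 3) →
      (∃ i ∈ Finset.Icc 1 3, σ i ≠ i) →
      (σ 1 = 2 ∧ σ 2 = 1 ∧ σ 3 = 3) ∨ (σ 1 = 3 ∧ σ 2 = 2 ∧ σ 3 = 1) ∨
      (σ 1 = 1 ∧ σ 2 = 3 ∧ σ 3 = 2) ∨ (σ 1 = 2 ∧ σ 2 = 3 ∧ σ 3 = 1) ∨
      (σ 1 = 3 ∧ σ 2 = 1 ∧ σ 3 = 2) := by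
    intro σ hmem hnt
    have b1 := Finset.mem_Icc.mp (hmem 1 (by decide))
    have b2 := Finset.mem_Icc.mp (hmem 2 (by decide))
    have b3 := Finset.mem_Icc.mp (hmem 3 (by decide))
    have h12 : σ 1 ≠ σ 2 := fun h => by have := σ.injective h; omega
    have h13 : σ 1 ≠ σ 3 := fun h => by have := σ.injective h; omega
    have h23 : σ 2 ≠ σ 3 := fun h => by have := σ.injective h; omega
    obtain ⟨i, hi, hne⟩ := hnt
    have hi' := Finset.mem_Icc.mp hi
    rcases (by omega : i = 1 ∨ i = 2 ∨ i = 3) with rfl | rfl | rfl <;> omega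
  constructor
  · intro hnb σ hmem hnt
    have htri := aux_nonbip_122 hG hdiam hant hnb
    rcases hσcases σ hmem hnt with ⟨hs1, hs2, hs3⟩ | ⟨hs1, hs2, hs3⟩ |
      ⟨hs1, hs2, hs3⟩ | ⟨hs1, hs2, hs3⟩ | ⟨hs1, hs2, hs3⟩
    · constructor
      · intro _; exact ⟨hs1, hs2, hs3⟩
      · intro _
        obtain ⟨H, hHhom, h1, h2, h3⟩ := aux_construct hG hdiam hant htri
        refine ⟨H, hHhom, fun x y hxy => ?_⟩
        have hpos : 0 < G.dist x y := hc.pos_dist_of_ne hxy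
        have hb := hub x y
        rcases (by omega : G.dist x y = 1 ∨ G.dist x y = 2 ∨ G.dist x y = 3) with h | h | h
        · rw [h1 x y h, h, hs1]
        · rw [h2 x y h, h, hs2]
        · rw [h3 x y h, h, hs3]
    · constructor
      · rintro ⟨H, hHhom, hd⟩
        exact (aux_kill_321 hG hdiam hant hHhom σ hd hs1 hs3).elim
      · rintro ⟨e1, e2, e3⟩; omega
    · constructor
      · rintro ⟨H, hHhom, hd⟩
        exact (aux_kill_132 hG hdiam hHhom σ hd hs1 hs3).elim
      · rintro ⟨e1, e2, e3⟩; omega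
    · constructor
      · rintro ⟨H, hHhom, hd⟩
        exact (aux_kill_231 hG hdiam hant hHhom σ hd hs1 hs3).elim
      · rintro ⟨e1, e2, e3⟩; omega
    · constructor
      · rintro ⟨H, hHhom, hd⟩
        exact (aux_kill_31 hG hHhom σ hd hs1 hs2 htri).elim
      · rintro ⟨e1, e2, e3⟩; omega
  · intro hbip σ hmem hnt
    rintro ⟨H, hHhom, hd⟩
    rcases hσcases σ hmem hnt with ⟨hs1, hs2, hs3⟩ | ⟨hs1, hs2, hs3⟩ |
      ⟨hs1, hs2, hs3⟩ | ⟨hs1, hs2, hs3⟩ | ⟨hs1, hs2, hs3⟩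
    · exact aux_kill_21_bip hG hdiam hHhom σ hd hs1 hs2 hbip
    · exact aux_kill_321 hG hdiam hant hHhom σ hd hs1 hs3
    · exact aux_kill_132 hG hdiam hHhom σ hd hs1 hs3
    · exact aux_kill_231 hG hdiam hant hHhom σ hd hs1 hs3
    · exact aux_kill_31_bip hG hdiam hHhom σ hd hs1 hs2 hbip
end

section
/- Let Γ be a metrically homogeneous graph of generic type and let σ be a non-trivial permutation of the set of distances of Γ which maps Γ to another metrically homogeneous graph. Then the diameter δ of Γ is finite, and σ(1) ∈ {2, δ−1, δ}. -/
open SimpleGraph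

section Helpers

variable {V : Type*} {G : SimpleGraph V}

private lemma walk_split (hc : G.Connected) :
    ∀ {x y : V} (p : G.Walk x y) (k : ℕ), k ≤ p.length →
      ∃ z, G.dist x z ≤ k ∧ G.dist z y ≤ p.length - k := by
  intro x y p
  induction p with
  | nil =>
    rename_i u
    intro k hk
    simp only [SimpleGraph.Walk.length_nil, Nat.le_zero] at hk
    subst hk
    exact ⟨u, by simp [SimpleGraph.dist_self], by simp [SimpleGraph.dist_self]⟩
  | @cons u v w h q ih =>
    intro k hk
    cases k with
    | zero => exact ⟨u, by simp, by simpa using dist_le (SimpleGraph.Walk.cons h q)⟩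
    | succ k' =>
      obtain ⟨z, hz1, hz2⟩ := ih k' (by simpa using hk)
      refine ⟨z, ?_, by simpa using hz2⟩
      calc G.dist u z ≤ G.dist u v + G.dist v z := hc.dist_triangle
        _ ≤ 1 + k' := by
            have : G.dist u v = 1 := dist_eq_one_iff_adj.mpr h
            omega
        _ = k' + 1 := by omega

private lemma exists_mid (hc : G.Connected) {x y : V} {n k : ℕ}
    (h : G.dist x y = n) (hk : k ≤ n) :
    ∃ z, G.dist x z = k ∧ G.dist z y = n - k := by
  obtain ⟨p, hp⟩ := (hc x y).exists_walk_length_eq_dist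
  obtain ⟨z, hz1, hz2⟩ := walk_split hc p k (by omega)
  have htri : G.dist x y ≤ G.dist x z + G.dist z y := hc.dist_triangle
  rw [hp] at hz2
  exact ⟨z, by omega, by omega⟩

private lemma ne_of_dist_pos {x y : V} {n : ℕ} (h : G.dist x y = n) (hn : 1 ≤ n) : x ≠ y := by
  rintro rfl
  rw [SimpleGraph.dist_self] at h
  omega

end Helpers

/-- if `Γ` is of generic type and admits a non-trivial twist `σ`,
then the diameter `δ` is finite and `σ(1) ∈ {2, δ-1, δ}`. -/
theorem options_for_sigma_one {V : Type*} (G H : SimpleGraph V)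
    (σ : Equiv.Perm ℕ)
    (hG : IsMetricallyHomogeneous G) (hgen : GenericType G)
    (hmaps : ∀ n ∈ DistSet G, σ n ∈ DistSet G)
    (hmaps' : ∀ n ∈ DistSet G, σ.symm n ∈ DistSet G)
    (hnontriv : ∃ n ∈ DistSet G, σ n ≠ n)
    (hH : IsMetricallyHomogeneous H)
    (htw : ∀ x y : V, x ≠ y → H.dist x y = σ (G.dist x y)) :
    ∃ δ : ℕ, HasDiameter G δ ∧ (σ 1 = 2 ∨ σ 1 = δ - 1 ∨ σ 1 = δ) := by
  classical
  obtain ⟨hGc, -⟩ := hG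
  obtain ⟨hHc, -⟩ := hH
  have στ : ∀ n, σ (σ.symm n) = n := σ.apply_symm_apply
  have τσ : ∀ n, σ.symm (σ n) = n := σ.symm_apply_apply
  -- initial segment property of DistSet
  have initial : ∀ {n : ℕ}, n ∈ DistSet G → ∀ m, 1 ≤ m → m ≤ n → m ∈ DistSet G := by
    rintro n ⟨hn, x, y, hxy⟩ m hm1 hmn
    obtain ⟨z, hz, -⟩ := exists_mid hGc hxy hmn
    exact ⟨hm1, x, z, hz⟩
  obtain ⟨n₀, hn₀mem, hn₀ne⟩ := hnontriv
  have one_mem : (1 : ℕ) ∈ DistSet G := initial hn₀mem 1 le_rfl hn₀mem.1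
  have σpos : ∀ n ∈ DistSet G, 1 ≤ σ n := fun n hn => (hmaps n hn).1
  -- subadditivity / triangle facts for σ on realized sums
  have subadd : ∀ i j : ℕ, 1 ≤ i → 1 ≤ j → (i + j) ∈ DistSet G →
      σ (i + j) ≤ σ i + σ j ∧ σ i ≤ σ j + σ (i + j) ∧ σ j ≤ σ i + σ (i + j) := by
    rintro i j hi hj ⟨hij, x, y, hxy⟩
    obtain ⟨z, hz1, hz2⟩ := exists_mid hGc hxy (by omega : i ≤ i + j)
    have hz2' : G.dist z y = j := by omega
    have hxz : x ≠ z := ne_of_dist_pos hz1 hi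
    have hzy : z ≠ y := ne_of_dist_pos hz2' hj
    have hxy' : x ≠ y := ne_of_dist_pos hxy (by omega)
    have e1 : H.dist x y = σ (i + j) := by rw [htw x y hxy', hxy]
    have e2 : H.dist x z = σ i := by rw [htw x z hxz, hz1]
    have e3 : H.dist z y = σ j := by rw [htw z y hzy, hz2']
    have c1 : H.dist y z = H.dist z y := SimpleGraph.dist_comm
    have c2 : H.dist z x = H.dist x z := SimpleGraph.dist_comm
    have t1 : H.dist x y ≤ H.dist x z + H.dist z y := hHc.dist_triangle
    have t2 : H.dist x z ≤ H.dist x y + H.dist y z := hHc.dist_triangle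
    have t3 : H.dist z y ≤ H.dist z x + H.dist x y := hHc.dist_triangle
    omega
  by_cases hb : ∃ B : ℕ, ∀ x y : V, G.dist x y ≤ B
  case neg =>
    exfalso
    push_neg at hb
    have all_mem : ∀ n, 1 ≤ n → n ∈ DistSet G := by
      intro n hn
      obtain ⟨x, y, hxy⟩ := hb n
      exact initial ⟨by omega, x, y, rfl⟩ n hn (le_of_lt hxy)
    have haσ : σ (σ.symm 1) = 1 := στ 1
    have hamem : σ.symm 1 ∈ DistSet G := hmaps' 1 one_mem
    have ha1 : 1 ≤ σ.symm 1 := hamem.1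
    have ka : ∀ k, 1 ≤ k → σ (k * σ.symm 1) ≤ k := by
      intro k
      induction k with
      | zero => omega
      | succ k ih =>
        intro _
        rcases Nat.eq_zero_or_pos k with rfl | hk0
        · simpa [haσ] using le_refl 1
        · have h1 := ih hk0
          have hmul : (k + 1) * σ.symm 1 = k * σ.symm 1 + σ.symm 1 := by ring
          rw [hmul]
          have hmem : (k * σ.symm 1 + σ.symm 1) ∈ DistSet G := by
            apply all_mem
            have : 1 ≤ k * σ.symm 1 := Nat.one_le_iff_ne_zero.mpr (by positivity)
            omega
          have hs := (subadd (k * σ.symm 1) (σ.symm 1)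
            (by have : 1 ≤ k * σ.symm 1 := Nat.one_le_iff_ne_zero.mpr (by positivity); omega)
            ha1 hmem).1
          omega
    by_cases ha2 : σ.symm 1 = 1
    · -- then σ is the identity on positive naturals
      have idall : ∀ k, 1 ≤ k → σ k = k := by
        intro k
        induction k using Nat.strong_induction_on with
        | _ k ih =>
          intro hk1
          have h1 : σ k ≤ k := by have := ka k hk1; rw [ha2, Nat.mul_one] at this; exact this
          have h2 : 1 ≤ σ k := σpos k (all_mem k hk1)
          by_contra hne
          have h3 : σ (σ k) = σ k := ih (σ k) (by omega) h2
          have h4 : σ k = k := σ.injective h3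
          exact hne h4
      exact hn₀ne (idall n₀ hn₀mem.1)
    · have ha2' : 2 ≤ σ.symm 1 := by omega
      have hs1 : 1 ≤ σ 1 := σpos 1 one_mem
      have key : ∀ m ∈ insert 1 ((Finset.Icc 1 (σ 1)).image (· * σ.symm 1)),
          σ m ∈ Finset.Icc 1 (σ 1) := by
        intro m hm
        simp only [Finset.mem_insert, Finset.mem_image, Finset.mem_Icc] at hm
        rcases hm with rfl | ⟨j, ⟨hj1, hjs⟩, rfl⟩
        · simp only [Finset.mem_Icc]; omega
        · have h1 := ka j hj1
          have hjpos : 1 ≤ j * σ.symm 1 := Nat.one_le_iff_ne_zero.mpr (by positivity)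
          have h2 : 1 ≤ σ (j * σ.symm 1) := σpos _ (all_mem _ hjpos)
          simp only [Finset.mem_Icc]; omega
      have hinj : Set.InjOn σ ↑(insert 1 ((Finset.Icc 1 (σ 1)).image (· * σ.symm 1))) :=
        fun p _ q _ h => σ.injective h
      have hcard := Finset.card_le_card_of_injOn σ key hinj
      have h1img : (1 : ℕ) ∉ (Finset.Icc 1 (σ 1)).image (· * σ.symm 1) := by
        simp only [Finset.mem_image, Finset.mem_Icc, not_exists]
        rintro j ⟨⟨hj1, _⟩, hja⟩
        have := Nat.mul_le_mul hj1 ha2'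
        omega
      have himg : ((Finset.Icc 1 (σ 1)).image (· * σ.symm 1)).card = σ 1 := by
        rw [Finset.card_image_of_injective _ (mul_left_injective₀ (by omega : σ.symm 1 ≠ 0))]
        simp [Nat.card_Icc]
      rw [Finset.card_insert_of_notMem h1img, himg, Nat.card_Icc] at hcard
      omega
  case pos =>
    obtain ⟨B, hB⟩ := hb
    have hbdd : BddAbove (DistSet G) := ⟨B, by rintro n ⟨hn, x, y, rfl⟩; exact hB x y⟩
    have hneS : (DistSet G).Nonempty := ⟨1, one_mem⟩
    have hδmem : sSup (DistSet G) ∈ DistSet G := Nat.sSup_mem hneS hbdd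
    set δ := sSup (DistSet G) with hδ_def
    have hδub : ∀ n ∈ DistSet G, n ≤ δ := fun n hn => le_csSup hbdd hn
    have hδ1 : 1 ≤ δ := hδmem.1
    have hdiam : ∀ x y : V, G.dist x y ≤ δ := by
      intro x y
      by_cases h : G.dist x y = 0
      · omega
      · exact hδub _ ⟨by omega, x, y, rfl⟩
    have mem_iff : ∀ n : ℕ, 1 ≤ n → n ≤ δ → n ∈ DistSet G :=
      fun n h1 h2 => initial hδmem n h1 h2
    refine ⟨δ, ⟨hdiam, hδmem.2⟩, ?_⟩
    have σIcc : ∀ n, 1 ≤ n → n ≤ δ → 1 ≤ σ n ∧ σ n ≤ δ := by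
      intro n h1 h2
      have h := hmaps n (mem_iff n h1 h2)
      exact ⟨h.1, hδub _ h⟩
    have τIcc : ∀ n, 1 ≤ n → n ≤ δ → 1 ≤ σ.symm n ∧ σ.symm n ≤ δ := by
      intro n h1 h2
      have h := hmaps' n (mem_iff n h1 h2)
      exact ⟨h.1, hδub _ h⟩
    have Tσ : ∀ i j : ℕ, 1 ≤ i → 1 ≤ j → i + j ≤ δ →
        σ (i + j) ≤ σ i + σ j ∧ σ i ≤ σ j + σ (i + j) ∧ σ j ≤ σ i + σ (i + j) :=
      fun i j hi hj hij => subadd i j hi hj (mem_iff _ (by omega) hij)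
    have Tτ : ∀ e f : ℕ, 1 ≤ e → 1 ≤ f → e + f ≤ δ →
        σ.symm (e + f) ≤ σ.symm e + σ.symm f ∧ σ.symm e ≤ σ.symm f + σ.symm (e + f) ∧
          σ.symm f ≤ σ.symm e + σ.symm (e + f) := by
      intro e f he hf hef
      have hmem := τIcc (e + f) (by omega) hef
      obtain ⟨-, x, y, hxy⟩ := mem_iff (σ.symm (e + f)) hmem.1 hmem.2
      have hxy' : x ≠ y := ne_of_dist_pos hxy hmem.1
      have hH1 : H.dist x y = e + f := by rw [htw x y hxy', hxy, στ]
      obtain ⟨z, hz1, hz2⟩ := exists_mid hHc hH1 (by omega : e ≤ e + f)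
      have hz2' : H.dist z y = f := by omega
      have hxz : x ≠ z := by
        rintro rfl; rw [SimpleGraph.dist_self] at hz1; omega
      have hzy : z ≠ y := by
        rintro rfl; rw [SimpleGraph.dist_self] at hz2'; omega
      have g1 : G.dist x z = σ.symm e := by
        have h := htw x z hxz
        rw [hz1] at h
        exact ((σ.symm_apply_eq).mpr h).symm
      have g2 : G.dist z y = σ.symm f := by
        have h := htw z y hzy
        rw [hz2'] at h
        exact ((σ.symm_apply_eq).mpr h).symm
      have gxy : G.dist x y = σ.symm (e + f) := hxy
      have c1 : G.dist y z = G.dist z y := SimpleGraph.dist_comm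
      have c2 : G.dist z x = G.dist x z := SimpleGraph.dist_comm
      have t1 : G.dist x y ≤ G.dist x z + G.dist z y := hGc.dist_triangle
      have t2 : G.dist x z ≤ G.dist x y + G.dist y z := hGc.dist_triangle
      have t3 : G.dist z y ≤ G.dist z x + G.dist x y := hGc.dist_triangle
      omega
    -- the key genericity constraint : σ 2 ≤ 2 σ i for i ≤ δ - 1
    have h3 : ∀ i, 1 ≤ i → i + 1 ≤ δ → σ 2 ≤ 2 * σ i := by
      intro i hi hiδ
      obtain ⟨-, x, y, hxy⟩ := mem_iff (i + 1) (by omega) hiδ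
      obtain ⟨m, hm1, hm2⟩ := exists_mid hGc hxy (by omega : i - 1 ≤ i + 1)
      have hm2' : G.dist m y = 2 := by omega
      obtain ⟨hinf, hind⟩ := hgen.1 m y hm2'
      obtain ⟨z, hz, z', hz', hzz'⟩ := hinf.nontrivial
      simp only [Set.mem_setOf_eq] at hz hz'
      have hmz : G.dist m z = 1 := dist_eq_one_iff_adj.mpr hz.1
      have hyz : G.dist y z = 1 := dist_eq_one_iff_adj.mpr hz.2
      have hmz2 : G.dist m z' = 1 := dist_eq_one_iff_adj.mpr hz'.1
      have hyz2 : G.dist y z' = 1 := dist_eq_one_iff_adj.mpr hz'.2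
      have hdzz' : G.dist z z' = 2 := by
        have hle : G.dist z z' ≤ 2 := by
          have t := hGc.dist_triangle (u := z) (v := m) (w := z')
          have c : G.dist z m = G.dist m z := SimpleGraph.dist_comm
          omega
        have h0 : 0 < G.dist z z' := hGc.pos_dist_of_ne hzz'
        have h1 : G.dist z z' ≠ 1 := fun h => hind z z' hz hz' (dist_eq_one_iff_adj.mp h)
        omega
      have hxz : G.dist x z = i := by
        have hub := hGc.dist_triangle (u := x) (v := m) (w := z)
        have hlb := hGc.dist_triangle (u := x) (v := z) (w := y)
        have c : G.dist z y = G.dist y z := SimpleGraph.dist_comm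
        omega
      have hxz2 : G.dist x z' = i := by
        have hub := hGc.dist_triangle (u := x) (v := m) (w := z')
        have hlb := hGc.dist_triangle (u := x) (v := z') (w := y)
        have c : G.dist z' y = G.dist y z' := SimpleGraph.dist_comm
        omega
      have hxzne : x ≠ z := ne_of_dist_pos hxz hi
      have hxz2ne : x ≠ z' := ne_of_dist_pos hxz2 hi
      have e1 : H.dist z z' = σ 2 := by rw [htw z z' hzz', hdzz']
      have e2 : H.dist z x = σ i := by
        rw [htw z x (Ne.symm hxzne), SimpleGraph.dist_comm, hxz]
      have e3 : H.dist x z' = σ i := by rw [htw x z' hxz2ne, hxz2]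
      have t := hHc.dist_triangle (u := z) (v := x) (w := z')
      omega
    -- now the purely combinatorial argument
    have hn₀δ : n₀ ≤ δ := hδub n₀ hn₀mem
    have hn₀1 : 1 ≤ n₀ := hn₀mem.1
    by_cases hs1 : σ 1 = 1
    · exfalso
      have idall : ∀ k, k + 1 ≤ δ → σ (k + 1) = k + 1 := by
        intro k
        induction k using Nat.strong_induction_on with
        | _ k ih =>
          intro hk
          rcases Nat.eq_zero_or_pos k with rfl | hk0
          · simpa using hs1
          · have hprev : σ k = k := by
              have h := ih (k - 1) (by omega) (by omega)
              have e : k - 1 + 1 = k := by omega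
              rwa [e] at h
            have T := Tσ 1 k le_rfl hk0 (by omega)
            have hadd : 1 + k = k + 1 := by omega
            rw [hadd] at T
            have hIcc := σIcc (k + 1) (by omega) hk
            have hne1 : σ (k + 1) ≠ k := by
              intro h
              have := σ.injective (h.trans hprev.symm)
              omega
            have hne2 : σ (k + 1) ≠ k - 1 := by
              intro h
              rcases Nat.lt_or_ge k 2 with h2 | h2
              · omega
              · have hprev2 : σ (k - 1) = k - 1 := by
                  have h' := ih (k - 2) (by omega) (by omega)
                  have e : k - 2 + 1 = k - 1 := by omega
                  rwa [e] at h'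
                have := σ.injective (h.trans hprev2.symm)
                omega
            omega
      have : σ n₀ = n₀ := by
        have h := idall (n₀ - 1) (by omega)
        have e : n₀ - 1 + 1 = n₀ := by omega
        rwa [e] at h
      exact hn₀ne this
    · by_cases hs2 : σ 1 = 2
      · exact Or.inl hs2
      by_cases hsd : σ 1 = δ
      · exact Or.inr (Or.inr hsd)
      by_cases hsd1 : σ 1 = δ - 1
      · exact Or.inr (Or.inl hsd1)
      exfalso
      have hsIcc := σIcc 1 le_rfl hδ1
      have hs3 : 3 ≤ σ 1 := by omega
      have hsle : σ 1 + 2 ≤ δ := by omega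
      have hδ5 : 5 ≤ δ := by omega
      have hτs : σ.symm (σ 1) = 1 := τσ 1
      have haIcc := τIcc 1 le_rfl hδ1
      have haσ : σ (σ.symm 1) = 1 := στ 1
      by_cases haδ : σ.symm 1 = δ
      · -- value 1 sits at position δ
        have hσδ : σ δ = 1 := by rw [← haδ, haσ]
        have e1 : 1 + (σ 1 - 1) = σ 1 := by omega
        have T1 := Tτ 1 (σ 1 - 1) le_rfl (by omega) (by omega)
        rw [e1] at T1
        have hm := τIcc (σ 1 - 1) (by omega) (by omega)
        have hne : σ.symm (σ 1 - 1) ≠ δ := by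
          intro h
          have h2 : σ δ = σ 1 - 1 := by rw [← h, στ]
          omega
        have hτsm1 : σ.symm (σ 1 - 1) = δ - 1 := by
          have := T1.2.1
          omega
        have T2 := Tτ 1 (σ 1) le_rfl (by omega) (by omega)
        have hp := τIcc (1 + σ 1) (by omega) (by omega)
        have hA : σ.symm (1 + σ 1) ≠ δ := by
          intro h
          have h2 : σ δ = 1 + σ 1 := by rw [← h, στ]
          omega
        have hB : σ.symm (1 + σ 1) ≠ δ - 1 := by
          intro h
          have h2 : σ (δ - 1) = 1 + σ 1 := by rw [← h, στ]
          have h4 : σ (δ - 1) = σ 1 - 1 := by rw [← hτsm1, στ]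
          omega
        have := T2.2.1
        omega
      · -- value 1 sits at position ≤ δ - 1, so σ 2 ≤ 2
        have hσ2b : σ 2 ≤ 2 := by
          have h := h3 (σ.symm 1) haIcc.1 (by omega)
          rw [haσ] at h
          omega
        have hσ2Icc := σIcc 2 (by omega) (by omega)
        have hσ2ne : σ 2 ≠ σ 1 := fun h => by have := σ.injective h; omega
        by_cases hσ21 : σ 2 = 1
        · -- τ 1 = 2
          have hτ1 : σ.symm 1 = 2 := by rw [← hσ21, τσ]
          have e1 : 1 + (σ 1 - 1) = σ 1 := by omega
          have T1 := Tτ 1 (σ 1 - 1) le_rfl (by omega) (by omega)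
          rw [e1] at T1
          have hm := τIcc (σ 1 - 1) (by omega) (by omega)
          have hx1 : σ.symm (σ 1 - 1) ≠ 1 := by
            intro h
            have h2 : σ 1 = σ 1 - 1 := by rw [← στ (σ 1 - 1), h]
            omega
          have hx2 : σ.symm (σ 1 - 1) ≠ 2 := by
            intro h
            have h2 : σ 2 = σ 1 - 1 := by rw [← h, στ]
            omega
          have hτm : σ.symm (σ 1 - 1) = 3 := by
            have := T1.2.2
            omega
          have hσ3 : σ 3 = σ 1 - 1 := by rw [← hτm, στ]
          have T2 := Tτ 1 (σ 1) le_rfl (by omega) (by omega)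
          have hp := τIcc (1 + σ 1) (by omega) (by omega)
          have hy1 : σ.symm (1 + σ 1) ≠ 1 := by
            intro h
            have h2 : σ 1 = 1 + σ 1 := by rw [← στ (1 + σ 1), h]
            omega
          have hy2 : σ.symm (1 + σ 1) ≠ 2 := by
            intro h
            have h2 : σ 2 = 1 + σ 1 := by rw [← h, στ]
            omega
          have hy3 : σ.symm (1 + σ 1) ≠ 3 := by
            intro h
            have h2 : σ 3 = 1 + σ 1 := by rw [← h, στ]
            omega
          have := T2.1
          omega
        · -- σ 2 = 2
          have hσ22 : σ 2 = 2 := by omega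
          have hτ2 : σ.symm 2 = 2 := by
            have h := congrArg σ.symm hσ22
            rw [τσ] at h
            exact h.symm
          have T1 := Tτ 2 (σ 1) (by omega) (by omega) (by omega)
          have hp := τIcc (2 + σ 1) (by omega) (by omega)
          have hz1 : σ.symm (2 + σ 1) ≠ 1 := by
            intro h
            have h2 : σ 1 = 2 + σ 1 := by rw [← στ (2 + σ 1), h]
            omega
          have hz2 : σ.symm (2 + σ 1) ≠ 2 := by
            intro h
            have h2 := congrArg σ h
            rw [στ] at h2
            omega
          have hτp2 : σ.symm (2 + σ 1) = 3 := by
            have := T1.1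
            omega
          have hσ3 : σ 3 = 2 + σ 1 := by rw [← hτp2, στ]
          have e2 : 2 + (σ 1 - 2) = σ 1 := by omega
          have T2 := Tτ 2 (σ 1 - 2) (by omega) (by omega) (by omega)
          rw [e2] at T2
          have hm := τIcc (σ 1 - 2) (by omega) (by omega)
          have hw1 : σ.symm (σ 1 - 2) ≠ 1 := by
            intro h
            have h2 : σ 1 = σ 1 - 2 := by rw [← στ (σ 1 - 2), h]
            omega
          have hw3 : σ.symm (σ 1 - 2) ≠ 3 := by
            intro h
            have h2 : σ 3 = σ 1 - 2 := by rw [← h, στ]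
            omega
          have hs4 : σ 1 = 4 := by
            have h2' := T2.2.2
            have hmid : σ.symm (σ 1 - 2) = 2 := by omega
            have h4 := congrArg σ hmid
            rw [στ] at h4
            omega
          have hσ36 : σ 3 = 6 := by omega
          have T3 := Tσ 2 2 (by omega) (by omega) (by omega)
          rw [(by norm_num : (2 : ℕ) + 2 = 4)] at T3
          have T4 := Tσ 1 3 (by omega) (by omega) (by omega)
          rw [(by norm_num : (1 : ℕ) + 3 = 4)] at T4
          have hσ4Icc := σIcc 4 (by omega) (by omega)
          have hne42 : σ 4 ≠ 2 := fun h => by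
            have := σ.injective (h.trans hσ22.symm); omega
          have hne44 : σ 4 ≠ 4 := fun h => by
            have := σ.injective (h.trans hs4.symm); omega
          have hσ43 : σ 4 = 3 := by
            have ht1 := T3.1
            have ht2 := T4.2.2
            omega
          have hτ3 : σ.symm 3 = 4 := by rw [← hσ43, τσ]
          have hτ4 : σ.symm 4 = 1 := by rw [← hs4, τσ]
          have T5 := Tτ 1 3 (by omega) (by omega) (by omega)
          rw [(by norm_num : (1 : ℕ) + 3 = 4)] at T5
          have ha5 : σ.symm 1 = 5 := by
            have h1 := T5.2.1
            have h2 := T5.2.2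
            have hna3 : σ.symm 1 ≠ 3 := by
              intro h
              rw [h] at haσ
              omega
            have hna4 : σ.symm 1 ≠ 4 := by
              intro h
              rw [h] at haσ
              omega
            omega
          have hσ51 : σ 5 = 1 := by rw [← ha5, haσ]
          have T6 := Tσ 2 3 (by omega) (by omega) (by omega)
          rw [(by norm_num : (2 : ℕ) + 3 = 5)] at T6
          have := T6.2.2
          omega
end

section
/- Let Γ be a metrically homogeneous graph of generic type with diameter δ and let σ be a permutation of {1,…,δ} for which Γ^σ is a metrically homogeneous graph, with σ(2) = 1. Then either σ = ρ⁻¹, or σ is the transposition (1,2) and δ = 3. -/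
open SimpleGraph

section AuxLemmas

variable {V' : Type*} {G' : SimpleGraph V'}

private lemma my_neighbor_step (hc : G'.Connected) {z y : V'} {d : ℕ}
    (h : G'.dist z y = d + 1) : ∃ w, G'.Adj z w ∧ G'.dist w y = d := by
  obtain ⟨p, hp⟩ := hc.exists_walk_length_eq_dist z y
  rw [h] at hp
  cases p with
  | nil => simp at hp
  | cons ha q =>
    rename_i w
    refine ⟨w, ha, le_antisymm ?_ ?_⟩
    · have := SimpleGraph.dist_le q
      simp [SimpleGraph.Walk.length_cons] at hp
      omega
    · have h1 : G'.dist z y ≤ G'.dist z w + G'.dist w y := hc.dist_triangle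
      have h2 : G'.dist z w ≤ 1 := by
        have := SimpleGraph.dist_le (SimpleGraph.Walk.cons ha SimpleGraph.Walk.nil)
        simpa using this
      omega

private lemma my_between (hc : G'.Connected) {x y : V'} {k : ℕ} (hk : k ≤ G'.dist x y) :
    ∃ z, G'.dist x z = k ∧ G'.dist z y = G'.dist x y - k := by
  induction k with
  | zero => exact ⟨x, SimpleGraph.dist_self, by simp⟩
  | succ n ih =>
    obtain ⟨z, hxz, hzy⟩ := ih (by omega)
    have hd : G'.dist z y = (G'.dist x y - (n + 1)) + 1 := by omega
    obtain ⟨w, haw, hwy⟩ := my_neighbor_step hc hd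
    refine ⟨w, le_antisymm ?_ ?_, hwy⟩
    · have h1 : G'.dist x w ≤ G'.dist x z + G'.dist z w := hc.dist_triangle
      have h2 : G'.dist z w ≤ 1 := by
        have := SimpleGraph.dist_le (SimpleGraph.Walk.cons haw SimpleGraph.Walk.nil)
        simpa using this
      omega
    · have h1 : G'.dist x y ≤ G'.dist x w + G'.dist w y := hc.dist_triangle
      omega

private lemma my_walk_up (u : ℕ → ℕ) (M : ℕ)
    (hinj : ∀ i j, i < M → j < M → u i = u j → i = j)
    (hstep : ∀ j, j + 1 < M → u (j + 1) = u j + 1 ∨ u j = u (j + 1) + 1)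
    (h01 : u 1 = u 0 + 1) : ∀ j, j < M → u j = u 0 + j := by
  have key : ∀ j, j + 1 < M → u (j + 1) = u j + 1 := by
    intro j
    induction j with
    | zero => exact fun _ => h01
    | succ n ih =>
      intro h
      rcases hstep (n + 1) h with h' | h'
      · exact h'
      · exfalso
        have hn := ih (by omega)
        have heq : u (n + 1 + 1) = u n := by omega
        have := hinj (n + 1 + 1) n (by omega) (by omega) heq
        omega
  intro j
  induction j with
  | zero => intro _; omega
  | succ n ih =>
    intro h
    have h1 := key n (by omega)
    have h2 := ih (by omega)
    omega

private lemma my_walk_down (u : ℕ → ℕ) (M : ℕ)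
    (hinj : ∀ i j, i < M → j < M → u i = u j → i = j)
    (hstep : ∀ j, j + 1 < M → u (j + 1) = u j + 1 ∨ u j = u (j + 1) + 1)
    (h01 : u 0 = u 1 + 1) : ∀ j, j < M → u j + j = u 0 := by
  have key : ∀ j, j + 1 < M → u j = u (j + 1) + 1 := by
    intro j
    induction j with
    | zero => exact fun _ => h01
    | succ n ih =>
      intro h
      rcases hstep (n + 1) h with h' | h'
      · exfalso
        have hn := ih (by omega)
        have heq : u (n + 1 + 1) = u n := by omega
        have := hinj (n + 1 + 1) n (by omega) (by omega) heq
        omega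
      · exact h'
  intro j
  induction j with
  | zero => intro _; omega
  | succ n ih =>
    intro h
    have h1 := key n (by omega)
    have h2 := ih (by omega)
    omega

end AuxLemmas

/-- if `σ(2) = 1` then `σ = ρ⁻¹`, or `σ` is the transposition
`(1,2)` and `δ = 3`. -/
theorem sigma_two_eq_one_implies_rho_inv {V : Type*} (G H : SimpleGraph V) (δ : ℕ)
    (σ : Equiv.Perm ℕ)
    (hG : IsMetricallyHomogeneous G) (hgen : GenericType G)
    (hdiam : HasDiameter G δ)
    (hperm : ∀ i ∈ Finset.Icc 1 δ, σ i ∈ Finset.Icc 1 δ)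
    (hH : IsMetricallyHomogeneous H)
    (htw : ∀ x y : V, x ≠ y → H.dist x y = σ (G.dist x y))
    (h2 : σ 2 = 1) :
    (∀ i ∈ Finset.Icc 1 δ, σ i = rhoInvFun δ i) ∨
    ((σ 1 = 2 ∧ σ 2 = 1 ∧ σ 3 = 3) ∧ δ = 3) := by
  obtain ⟨hGc, -⟩ := hG
  obtain ⟨hHc, -⟩ := hH
  obtain ⟨hub, x0, y0, hx0⟩ := hdiam
  have hrange : ∀ i, 1 ≤ i → i ≤ δ → 1 ≤ σ i ∧ σ i ≤ δ := by
    intro i h1 h2'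
    have := hperm i (Finset.mem_Icc.mpr ⟨h1, h2'⟩)
    exact Finset.mem_Icc.mp this
  -- degenerate cases
  rcases Nat.lt_or_ge δ 2 with hδ | hδ2
  · interval_cases δ
    · left; intro i hi; simp at hi
    · exfalso
      have h1 := (hrange 1 le_rfl le_rfl).1
      have h1' := (hrange 1 le_rfl le_rfl).2
      have hσ1 : σ 1 = 1 := by omega
      have := σ.injective (hσ1.trans h2.symm)
      omega
  -- realization of all distances up to δ
  have hreal : ∀ k, k ≤ δ → ∃ x y : V, G.dist x y = k := by
    intro k hk
    obtain ⟨z, hz, -⟩ := my_between hGc (x := x0) (y := y0) (k := k) (by omega)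
    exact ⟨x0, z, hz⟩
  have ne_of_Gdist : ∀ {x y : V} {k : ℕ}, G.dist x y = k → 1 ≤ k → x ≠ y := by
    intro x y k hd hk e
    subst e
    rw [SimpleGraph.dist_self] at hd
    omega
  have ne_of_Hdist : ∀ {x y : V} {k : ℕ}, H.dist x y = k → 1 ≤ k → x ≠ y := by
    intro x y k hd hk e
    subst e
    rw [SimpleGraph.dist_self] at hd
    omega
  -- G.dist ≤ 2 * H.dist
  have hE2 : ∀ n, ∀ x y : V, H.dist x y = n → G.dist x y ≤ 2 * n := by
    intro n
    induction n with
    | zero =>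
      intro x y h
      have : x = y := hHc.dist_eq_zero_iff.mp h
      subst this
      simp [SimpleGraph.dist_self]
    | succ n ih =>
      intro x y h
      obtain ⟨z, hxz, hzy⟩ := my_between hHc (x := x) (y := y) (k := n) (by omega)
      rw [h] at hzy
      have hzy1 : H.dist z y = 1 := by omega
      have hzny : z ≠ y := ne_of_Hdist hzy1 le_rfl
      have hσzy : σ (G.dist z y) = 1 := by rw [← htw z y hzny]; exact hzy1
      have hGzy : G.dist z y = 2 := σ.injective (hσzy.trans h2.symm)
      have hxz' := ih x z hxz
      have htri : G.dist x y ≤ G.dist x z + G.dist z y := hGc.dist_triangle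
      omega
  -- H.dist ≤ half of even G.dist
  have hE1 : ∀ k, ∀ x y : V, G.dist x y = 2 * k → H.dist x y ≤ k := by
    intro k
    induction k with
    | zero =>
      intro x y h
      have : x = y := hGc.dist_eq_zero_iff.mp h
      subst this
      simp [SimpleGraph.dist_self]
    | succ k ih =>
      intro x y h
      obtain ⟨z, hxz, hzy⟩ := my_between hGc (x := x) (y := y) (k := 2) (by omega)
      rw [h] at hzy
      have hxnz : x ≠ z := ne_of_Gdist hxz (by omega)
      have hHxz : H.dist x z = 1 := by rw [htw x z hxnz, hxz]; exact h2
      have hHzy := ih z y (by omega)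
      have htri : H.dist x y ≤ H.dist x z + H.dist z y := hHc.dist_triangle
      omega
  -- σ doubles even distances down
  have hEven : ∀ k, 1 ≤ k → 2 * k ≤ δ → σ (2 * k) = k := by
    intro k hk1 hk2
    obtain ⟨x, y, hxy⟩ := hreal (2 * k) hk2
    have hne : x ≠ y := ne_of_Gdist hxy (by omega)
    have hHxy : H.dist x y = σ (2 * k) := by rw [htw x y hne, hxy]
    have hle := hE1 k x y hxy
    have hge := hE2 (H.dist x y) x y rfl
    omega
  -- σ of odd distances lands above δ/2
  have hOddLow : ∀ j, 2 * j + 1 ≤ δ → δ / 2 + 1 ≤ σ (2 * j + 1) := by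
    intro j hj
    by_contra hlt
    push_neg at hlt
    have hk1 := (hrange (2 * j + 1) (by omega) hj).1
    have hkd : σ (2 * j + 1) ≤ δ / 2 := by omega
    have h2k : σ (2 * (σ (2 * j + 1))) = σ (2 * j + 1) :=
      hEven (σ (2 * j + 1)) hk1 (by omega)
    have := σ.injective h2k
    omega
  -- consecutive odd values differ by exactly one
  have hstep : ∀ j, 2 * j + 3 ≤ δ →
      σ (2 * j + 3) = σ (2 * j + 1) + 1 ∨ σ (2 * j + 1) = σ (2 * j + 3) + 1 := by
    intro j hj
    obtain ⟨x, y, hxy⟩ := hreal (2 * j + 3) hj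
    obtain ⟨z, hxz, hzy⟩ := my_between hGc (x := x) (y := y) (k := 2 * j + 1) (by omega)
    rw [hxy] at hzy
    have hzy2 : G.dist z y = 2 := by omega
    have hxny : x ≠ y := ne_of_Gdist hxy (by omega)
    have hxnz : x ≠ z := ne_of_Gdist hxz (by omega)
    have hzny : z ≠ y := ne_of_Gdist hzy2 (by omega)
    have Hxy : H.dist x y = σ (2 * j + 3) := by rw [htw x y hxny, hxy]
    have Hxz : H.dist x z = σ (2 * j + 1) := by rw [htw x z hxnz, hxz]
    have Hzy : H.dist z y = 1 := by rw [htw z y hzny, hzy2]; exact h2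
    have ht1 : H.dist x y ≤ H.dist x z + H.dist z y := hHc.dist_triangle
    have ht2 : H.dist x z ≤ H.dist x y + H.dist y z := hHc.dist_triangle
    have hco : H.dist y z = H.dist z y := SimpleGraph.dist_comm ..
    have hne : σ (2 * j + 3) ≠ σ (2 * j + 1) := by
      intro e
      have := σ.injective e
      omega
    omega
  -- the walk on odd arguments
  set M := δ - δ / 2 with hM
  have hM1 : 1 ≤ M := by omega
  have huinj : ∀ i j, i < M → j < M →
      σ (2 * i + 1) = σ (2 * j + 1) → i = j := by
    intro i j _ _ e
    have := σ.injective e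
    omega
  have hustep : ∀ j, j + 1 < M →
      σ (2 * (j + 1) + 1) = σ (2 * j + 1) + 1 ∨
      σ (2 * j + 1) = σ (2 * (j + 1) + 1) + 1 := by
    intro j hjM
    have h3 : 2 * j + 3 ≤ δ := by omega
    have := hstep j h3
    have e1 : 2 * (j + 1) + 1 = 2 * j + 3 := by ring
    rw [e1]
    exact this
  -- case M = 1 : δ = 2
  rcases Nat.lt_or_ge M 2 with hMlt | hM2
  · have hδ2' : δ = 2 := by omega
    subst hδ2'
    left
    intro i hi
    rw [Finset.mem_Icc] at hi
    obtain ⟨hi1, hi2⟩ := hi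
    interval_cases i
    · have h1 := (hrange 1 le_rfl (by omega)).1
      have h1' := (hrange 1 le_rfl (by omega)).2
      have : σ 1 ≠ 1 := by
        intro e
        have := σ.injective (e.trans h2.symm)
        omega
      simp only [rhoInvFun]
      norm_num
      omega
    · simp only [rhoInvFun]
      norm_num
      omega
  -- main case : M ≥ 2
  · have h01 := hustep 0 (by omega)
    simp only [Nat.mul_zero, Nat.zero_add] at h01
    have hmax : 2 * (M - 1) + 1 ≤ δ := by omega
    rcases h01 with hup | hdown
    · -- increasing case
      have hall := my_walk_up (fun j => σ (2 * j + 1)) M huinj hustep (by simpa using hup)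
      have hlast := hall (M - 1) (by omega)
      norm_num at hlast
      have hlb := hOddLow 0 (by omega)
      norm_num at hlb
      have hub1 := (hrange (2 * (M - 1) + 1) (by omega) hmax).2
      have hσ1 : σ 1 = δ / 2 + 1 := by omega
      rcases Nat.lt_or_ge δ 4 with hδ4 | hδ4
      · -- δ = 3 : the exceptional case
        have hδ3 : δ = 3 := by omega
        subst hδ3
        right
        refine ⟨⟨by omega, h2, ?_⟩, rfl⟩
        have h3 := hall 1 (by omega)
        norm_num at h3
        omega
      · -- δ ≥ 4 : contradiction
        exfalso
        set m := δ / 2 with hm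
        have hm2 : 2 ≤ m := by omega
        obtain ⟨x, y, hxy⟩ := hreal 1 (by omega)
        have hxny : x ≠ y := ne_of_Gdist hxy le_rfl
        have hHxy : H.dist x y = m + 1 := by rw [htw x y hxny, hxy, hσ1]
        obtain ⟨z, hxz, hzy⟩ := my_between hHc (x := x) (y := y) (k := m) (by omega)
        rw [hHxy] at hzy
        have hzy1 : H.dist z y = 1 := by omega
        have hxnz : x ≠ z := ne_of_Hdist hxz (by omega)
        have hzny : z ≠ y := ne_of_Hdist hzy1 le_rfl
        have hGzy : G.dist z y = 2 := by
          have : σ (G.dist z y) = 1 := by rw [← htw z y hzny]; exact hzy1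
          exact σ.injective (this.trans h2.symm)
        have hGxz : G.dist x z = 2 * m := by
          have e1 : σ (G.dist x z) = m := by rw [← htw x z hxnz]; exact hxz
          have e2 : σ (2 * m) = m := hEven m (by omega) (by omega)
          exact σ.injective (e1.trans e2.symm)
        have htri : G.dist x z ≤ G.dist x y + G.dist y z := hGc.dist_triangle
        have hco : G.dist y z = G.dist z y := SimpleGraph.dist_comm ..
        omega
    · -- decreasing case : σ = ρ⁻¹
      have hall := my_walk_down (fun j => σ (2 * j + 1)) M huinj hustep (by simpa using hdown)
      have hlast := hall (M - 1) (by omega)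
      norm_num at hlast
      have hlb := hOddLow (M - 1) hmax
      have hub1 := (hrange 1 (by omega) (by omega)).2
      have hσ1 : σ 1 = δ := by omega
      left
      intro i hi
      rw [Finset.mem_Icc] at hi
      rcases Nat.even_or_odd i with he | ho
      · obtain ⟨k, hk⟩ := id he
        have hk1 : 1 ≤ k := by omega
        have hσi : σ i = k := by
          have h2k := hEven k hk1 (by omega)
          rw [hk, show k + k = 2 * k by ring]
          exact h2k
        simp only [rhoInvFun, if_pos he]
        omega
      · obtain ⟨j, hj⟩ := id ho
        have hjM : j < M := by omega
        have hji := hall j hjM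
        norm_num at hji
        have hσi : σ i + j = δ := by rw [hj]; omega
        have hodd : ¬ Even i := by
          rw [hj]
          simp [Nat.even_iff, Nat.add_mod, Nat.mul_mod]
        simp only [rhoInvFun, if_neg hodd]
        omega
end

section
/- Let Γ be a metrically homogeneous graph of generic type with diameter δ ≥ 3, and let σ be a permutation of {1,…,δ} such that Γ^σ is itself a metrically homogeneous graph. Assume that σ(1) ≥ δ−1, σ(1) > 2, and σ⁻¹(1) > 2. Then σ(2) = 2. -/
open SimpleGraph

private lemma aux_walk_split {V : Type*} {G : SimpleGraph V} {x y : V} (w : G.Walk x y) :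
    ∀ a : ℕ, a ≤ w.length →
      ∃ z : V, ∃ p : G.Walk x z, ∃ q : G.Walk z y,
        p.length = a ∧ q.length = w.length - a := by
  induction w with
  | nil =>
    intro a ha
    simp only [SimpleGraph.Walk.length_nil, Nat.le_zero] at ha
    subst ha
    exact ⟨_, SimpleGraph.Walk.nil, SimpleGraph.Walk.nil, by simp, by simp⟩
  | cons h p ih =>
    intro a ha
    cases a with
    | zero =>
      exact ⟨_, SimpleGraph.Walk.nil, SimpleGraph.Walk.cons h p, by simp, by simp⟩
    | succ a' =>
      have ha' : a' ≤ p.length := by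
        simp only [SimpleGraph.Walk.length_cons] at ha; omega
      obtain ⟨z, p₁, q, hp, hq⟩ := ih a' ha'
      refine ⟨z, SimpleGraph.Walk.cons h p₁, q, by simp [hp], ?_⟩
      simp only [SimpleGraph.Walk.length_cons, hq]
      omega

private lemma aux_dist_mid {V : Type*} {G : SimpleGraph V} (hc : G.Connected) (x y : V)
    (a : ℕ) (ha : a ≤ G.dist x y) :
    ∃ z : V, G.dist x z = a ∧ G.dist z y = G.dist x y - a := by
  obtain ⟨w, hw⟩ := hc.exists_walk_length_eq_dist x y
  obtain ⟨z, p, q, hp, hq⟩ := aux_walk_split w a (by omega)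
  have h1 : G.dist x z ≤ a := hp ▸ SimpleGraph.dist_le p
  have h2 : G.dist z y ≤ G.dist x y - a := by
    have := SimpleGraph.dist_le q; omega
  have h3 := hc.dist_triangle (u := x) (v := z) (w := y)
  exact ⟨z, by omega, by omega⟩

/-- if `σ(1) ≥ δ-1`, `σ(1) > 2` and `σ⁻¹(1) > 2`, then
`σ(2) = 2`. -/
theorem sigma_two_eq_two {V : Type*} (G H : SimpleGraph V) (δ : ℕ) (hδ : 3 ≤ δ)
    (σ : Equiv.Perm ℕ)
    (hG : IsMetricallyHomogeneous G) (hgen : GenericType G)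
    (hdiam : HasDiameter G δ)
    (hperm : ∀ i ∈ Finset.Icc 1 δ, σ i ∈ Finset.Icc 1 δ)
    (hH : IsMetricallyHomogeneous H)
    (htw : ∀ x y : V, x ≠ y → H.dist x y = σ (G.dist x y))
    (h1 : δ - 1 ≤ σ 1) (h1' : 2 < σ 1) (hinv1 : 2 < σ.symm 1) :
    σ 2 = 2 := by
  classical
  obtain ⟨hG', -⟩ := hG
  obtain ⟨hH', -⟩ := hH
  obtain ⟨hdub, w₀, w₁, hw01⟩ := hdiam
  have hGpos : ∀ x y : V, x ≠ y → 1 ≤ G.dist x y := fun x y h => hG'.pos_dist_of_ne h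
  have hσb : ∀ i, 1 ≤ i → i ≤ δ → 1 ≤ σ i ∧ σ i ≤ δ := by
    intro i hi1 hi2
    exact Finset.mem_Icc.mp (hperm i (Finset.mem_Icc.mpr ⟨hi1, hi2⟩))
  have himg : (Finset.Icc 1 δ).image σ = Finset.Icc 1 δ := by
    apply Finset.eq_of_subset_of_card_le
    · intro j hj
      obtain ⟨i, hi, rfl⟩ := Finset.mem_image.mp hj
      exact hperm i hi
    · rw [Finset.card_image_of_injective _ σ.injective]
  have hτb : ∀ i, 1 ≤ i → i ≤ δ → 1 ≤ σ.symm i ∧ σ.symm i ≤ δ := by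
    intro i hi1 hi2
    have hi : i ∈ Finset.Icc 1 δ := Finset.mem_Icc.mpr ⟨hi1, hi2⟩
    rw [← himg] at hi
    obtain ⟨j, hj, hji⟩ := Finset.mem_image.mp hi
    have hj' : σ.symm i = j := by rw [← hji]; exact σ.symm_apply_apply j
    rw [hj']
    exact Finset.mem_Icc.mp hj
  have hreal : ∀ i, 1 ≤ i → i ≤ δ → ∃ x y : V, G.dist x y = i := by
    intro i hi1 hi2
    obtain ⟨z, hz1, -⟩ := aux_dist_mid hG' w₀ w₁ i (by omega)
    exact ⟨w₀, z, hz1⟩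
  have htw' : ∀ x y : V, x ≠ y → G.dist x y = σ.symm (H.dist x y) := by
    intro x y h
    rw [htw x y h, Equiv.symm_apply_apply]
  have hrealH : ∀ j, 1 ≤ j → j ≤ δ → ∃ x y : V, H.dist x y = j := by
    intro j hj1 hj2
    obtain ⟨hj1', hj2'⟩ := hτb j hj1 hj2
    obtain ⟨x, y, hxy⟩ := hreal (σ.symm j) hj1' hj2'
    have hne : x ≠ y := by
      intro h; subst h; rw [SimpleGraph.dist_self] at hxy; omega
    exact ⟨x, y, by rw [htw x y hne, hxy, Equiv.apply_symm_apply]⟩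
  have S1 : ∀ a b : ℕ, 1 ≤ a → 1 ≤ b → a + b ≤ δ →
      σ (a + b) ≤ σ a + σ b ∧ σ a ≤ σ b + σ (a + b) ∧ σ b ≤ σ a + σ (a + b) := by
    intro a b ha hb hab
    obtain ⟨x, y, hxy⟩ := hreal (a + b) (by omega) hab
    obtain ⟨z, hz1, hz2⟩ := aux_dist_mid hG' x y a (by omega)
    have hz2' : G.dist z y = b := by omega
    have hxz : x ≠ z := by intro h; subst h; rw [SimpleGraph.dist_self] at hz1; omega
    have hzy : z ≠ y := by intro h; subst h; rw [SimpleGraph.dist_self] at hz2'; omega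
    have hxy' : x ≠ y := by intro h; subst h; rw [SimpleGraph.dist_self] at hxy; omega
    have e1 : H.dist x z = σ a := by rw [htw x z hxz, hz1]
    have e2 : H.dist z y = σ b := by rw [htw z y hzy, hz2']
    have e3 : H.dist x y = σ (a + b) := by rw [htw x y hxy', hxy]
    have c1 : H.dist y z = H.dist z y := SimpleGraph.dist_comm
    have c2 : H.dist z x = H.dist x z := SimpleGraph.dist_comm
    have t1 := hH'.dist_triangle (u := x) (v := z) (w := y)
    have t2 := hH'.dist_triangle (u := x) (v := y) (w := z)
    have t3 := hH'.dist_triangle (u := z) (v := x) (w := y)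
    exact ⟨by omega, by omega, by omega⟩
  have S2 : ∀ a b : ℕ, 1 ≤ a → 1 ≤ b → a + b ≤ δ →
      σ.symm (a + b) ≤ σ.symm a + σ.symm b ∧ σ.symm a ≤ σ.symm b + σ.symm (a + b) ∧
        σ.symm b ≤ σ.symm a + σ.symm (a + b) := by
    intro a b ha hb hab
    obtain ⟨x, y, hxy⟩ := hrealH (a + b) (by omega) hab
    obtain ⟨z, hz1, hz2⟩ := aux_dist_mid hH' x y a (by omega)
    have hz2' : H.dist z y = b := by omega
    have hxz : x ≠ z := by intro h; subst h; rw [SimpleGraph.dist_self] at hz1; omega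
    have hzy : z ≠ y := by intro h; subst h; rw [SimpleGraph.dist_self] at hz2'; omega
    have hxy' : x ≠ y := by intro h; subst h; rw [SimpleGraph.dist_self] at hxy; omega
    have e1 : G.dist x z = σ.symm a := by rw [htw' x z hxz, hz1]
    have e2 : G.dist z y = σ.symm b := by rw [htw' z y hzy, hz2']
    have e3 : G.dist x y = σ.symm (a + b) := by rw [htw' x y hxy', hxy]
    have c1 : G.dist y z = G.dist z y := SimpleGraph.dist_comm
    have c2 : G.dist z x = G.dist x z := SimpleGraph.dist_comm
    have t1 := hG'.dist_triangle (u := x) (v := z) (w := y)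
    have t2 := hG'.dist_triangle (u := x) (v := y) (w := z)
    have t3 := hG'.dist_triangle (u := z) (v := x) (w := y)
    exact ⟨by omega, by omega, by omega⟩
  have Sq : ∀ m : ℕ, 1 ≤ m → m + 1 ≤ δ →
      ∃ x z z' : V, G.dist x z = m ∧ G.dist x z' = m ∧ G.dist z z' = 2 := by
    intro m hm1 hm2
    obtain ⟨x, y, hxy⟩ := hreal (m + 1) (by omega) hm2
    obtain ⟨p, hp1, hp2⟩ := aux_dist_mid hG' x y (m - 1) (by omega)
    have hp2' : G.dist p y = 2 := by omega
    obtain ⟨hinf, hind⟩ := hgen.1 p y hp2'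
    obtain ⟨z, hzS, z', hz'S, hne⟩ := hinf.nontrivial
    have hpz : G.dist p z = 1 := SimpleGraph.dist_eq_one_iff_adj.mpr hzS.1
    have hyz : G.dist y z = 1 := SimpleGraph.dist_eq_one_iff_adj.mpr hzS.2
    have hpz' : G.dist p z' = 1 := SimpleGraph.dist_eq_one_iff_adj.mpr hz'S.1
    have hyz' : G.dist y z' = 1 := SimpleGraph.dist_eq_one_iff_adj.mpr hz'S.2
    have hzz' : G.dist z z' = 2 := by
      have hnadj : ¬ G.Adj z z' := hind z z' hzS hz'S
      have hne1 : G.dist z z' ≠ 1 := fun h => hnadj (SimpleGraph.dist_eq_one_iff_adj.mp h)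
      have hle : G.dist z z' ≤ 2 := by
        have t1 := hG'.dist_triangle (u := z) (v := p) (w := z')
        have c1 : G.dist z p = G.dist p z := SimpleGraph.dist_comm
        omega
      have hpos := hGpos z z' hne
      omega
    have hxz : G.dist x z = m := by
      have t1 := hG'.dist_triangle (u := x) (v := p) (w := z)
      have t2 := hG'.dist_triangle (u := x) (v := z) (w := y)
      have c1 : G.dist z y = G.dist y z := SimpleGraph.dist_comm
      omega
    have hxz' : G.dist x z' = m := by
      have t1 := hG'.dist_triangle (u := x) (v := p) (w := z')
      have t2 := hG'.dist_triangle (u := x) (v := z') (w := y)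
      have c1 : G.dist z' y = G.dist y z' := SimpleGraph.dist_comm
      omega
    exact ⟨x, z, z', hxz, hxz', hzz'⟩
  -- main case split on k = σ⁻¹(1)
  have hk1 : σ (σ.symm 1) = 1 := Equiv.apply_symm_apply σ 1
  have hkb := hτb 1 (by omega) (by omega)
  have hσ1b := hσb 1 (by omega) (by omega)
  have hσ2b := hσb 2 (by omega) (by omega)
  have hσ2ne1 : σ 2 ≠ 1 := by
    intro h
    have h2 : (2 : ℕ) = σ.symm 1 := σ.injective (by rw [h, hk1])
    omega
  by_cases hkδ : σ.symm 1 = δ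
  case neg =>
    -- Case A : k ≤ δ - 1
    obtain ⟨x, z, z', hxz, hxz', hzz'⟩ := Sq (σ.symm 1) (by omega) (by omega)
    have hnzx : z ≠ x := by intro h; subst h; rw [SimpleGraph.dist_self] at hxz; omega
    have hnxz' : x ≠ z' := by intro h; subst h; rw [SimpleGraph.dist_self] at hxz'; omega
    have hnzz' : z ≠ z' := by intro h; subst h; rw [SimpleGraph.dist_self] at hzz'; omega
    have e1 : H.dist z x = 1 := by
      rw [htw z x hnzx, (SimpleGraph.dist_comm : G.dist z x = G.dist x z), hxz, hk1]
    have e2 : H.dist x z' = 1 := by rw [htw x z' hnxz', hxz', hk1]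
    have e3 : H.dist z z' = σ 2 := by rw [htw z z' hnzz', hzz']
    have t := hH'.dist_triangle (u := z) (v := x) (w := z')
    omega
  case pos =>
    -- Case B : k = δ
    have hσδ : σ δ = 1 := by rw [← hkδ]; exact hk1
    have hσ1δ : σ 1 = δ := by
      rcases (by omega : σ 1 = δ - 1 ∨ σ 1 = δ) with h | h
      · exfalso
        have hτδ1 : σ.symm (δ - 1) = 1 := by rw [← h, Equiv.symm_apply_apply]
        have hs := (S2 1 (δ - 1) (by omega) (by omega) (by omega)).2.1
        rw [(by omega : 1 + (δ - 1) = δ)] at hs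
        have hτδb := hτb δ (by omega) (by omega)
        have hτδne : σ.symm δ ≠ δ := by
          intro hh
          have : δ = (1 : ℕ) := σ.symm.injective (by rw [hh, hkδ])
          omega
        have h4 : 4 ≤ δ := by omega
        have hs2 := (S2 1 (δ - 2) (by omega) (by omega) (by omega)).2.1
        rw [(by omega : 1 + (δ - 2) = δ - 1)] at hs2
        have hτδ2b := hτb (δ - 2) (by omega) (by omega)
        have hτδ : σ.symm δ = δ - 1 := by omega
        rcases (by omega : σ.symm (δ - 2) = δ - 1 ∨ σ.symm (δ - 2) = δ) with hh | hh
        · have : δ - 2 = δ := σ.symm.injective (by rw [hh, hτδ])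
          omega
        · have : δ - 2 = (1 : ℕ) := σ.symm.injective (by rw [hh, hkδ])
          omega
      · exact h
    by_contra hns
    have hτδeq : σ.symm δ = 1 := by rw [← hσ1δ, Equiv.symm_apply_apply]
    have hσm : σ (σ.symm 2) = 2 := Equiv.apply_symm_apply σ 2
    have hmb := hτb 2 (by omega) (by omega)
    have hm1 : σ.symm 2 ≠ 1 := by
      intro hh; rw [hh] at hσm; omega
    have hm2 : σ.symm 2 ≠ 2 := by
      intro hh; rw [hh] at hσm; exact hns hσm
    have hmδ : σ.symm 2 ≠ δ := by
      intro hh; rw [hh] at hσm; omega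
    obtain ⟨x, z, z', hxz, hxz', hzz'⟩ := Sq (σ.symm 2) (by omega) (by omega)
    have hbound : σ 2 ≤ 4 := by
      have hnzx : z ≠ x := by intro h; subst h; rw [SimpleGraph.dist_self] at hxz; omega
      have hnxz' : x ≠ z' := by intro h; subst h; rw [SimpleGraph.dist_self] at hxz'; omega
      have hnzz' : z ≠ z' := by intro h; subst h; rw [SimpleGraph.dist_self] at hzz'; omega
      have e1 : H.dist z x = 2 := by
        rw [htw z x hnzx, (SimpleGraph.dist_comm : G.dist z x = G.dist x z), hxz, hσm]
      have e2 : H.dist x z' = 2 := by rw [htw x z' hnxz', hxz', hσm]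
      have e3 : H.dist z z' = σ 2 := by rw [htw z z' hnzz', hzz']
      have t := hH'.dist_triangle (u := z) (v := x) (w := z')
      omega
    rcases (by omega : σ 2 = 3 ∨ σ 2 = 4) with hs3 | hs4
    · -- σ(2) = 3
      have hτ3 : σ.symm 3 = 2 := by rw [← hs3, Equiv.symm_apply_apply]
      have hq := (S2 1 2 (by omega) (by omega) (by omega)).2.1
      rw [(by norm_num : (1 : ℕ) + 2 = 3)] at hq
      have hmval : σ.symm 2 = δ - 2 := by
        rcases (by omega : σ.symm 2 = δ - 2 ∨ σ.symm 2 = δ - 1) with hh | hh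
        · exact hh
        · exfalso
          have hσδ1 : σ (δ - 1) = 2 := by rw [← hh]; exact hσm
          have hp := (S1 1 (δ - 1) (by omega) (by omega) (by omega)).2.1
          rw [(by omega : 1 + (δ - 1) = δ)] at hp
          omega
      have hσδ2 : σ (δ - 2) = 2 := by rw [← hmval]; exact hσm
      have hδ5 : 5 ≤ δ := by omega
      have hp1 := (S1 1 (δ - 1) (by omega) (by omega) (by omega)).2.1
      rw [(by omega : 1 + (δ - 1) = δ)] at hp1
      have hσδ1b := hσb (δ - 1) (by omega) (by omega)
      have hσδ1ne : σ (δ - 1) ≠ δ := by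
        intro hh
        have : δ - 1 = (1 : ℕ) := σ.injective (by rw [hh, hσ1δ])
        omega
      have hσδ1 : σ (δ - 1) = δ - 1 := by omega
      by_cases hδeq : δ = 5
      · -- the exceptional δ = 5 configuration; refute via a six-point configuration
        subst hδeq
        have s3v : σ 3 = 2 := by norm_num at hσδ2; exact hσδ2
        have s4v : σ 4 = 4 := by norm_num at hσδ1; exact hσδ1
        have hD : ∀ x y : V, (G.dist x y = 0 ∧ H.dist x y = 0) ∨
            (G.dist x y = 1 ∧ H.dist x y = 5) ∨ (G.dist x y = 2 ∧ H.dist x y = 3) ∨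
            (G.dist x y = 3 ∧ H.dist x y = 2) ∨ (G.dist x y = 4 ∧ H.dist x y = 4) ∨
            (G.dist x y = 5 ∧ H.dist x y = 1) := by
          intro x y
          by_cases hne : x = y
          · subst hne
            exact Or.inl ⟨SimpleGraph.dist_self, SimpleGraph.dist_self⟩
          · have hb1 := hGpos x y hne
            have hb2 := hdub x y
            have he := htw x y hne
            rcases (by omega : G.dist x y = 1 ∨ G.dist x y = 2 ∨ G.dist x y = 3 ∨
                G.dist x y = 4 ∨ G.dist x y = 5) with h | h | h | h | h
            · exact Or.inr (Or.inl ⟨h, by rw [he, h, hσ1δ]⟩)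
            · exact Or.inr (Or.inr (Or.inl ⟨h, by rw [he, h, hs3]⟩))
            · exact Or.inr (Or.inr (Or.inr (Or.inl ⟨h, by rw [he, h, s3v]⟩)))
            · exact Or.inr (Or.inr (Or.inr (Or.inr (Or.inl ⟨h, by rw [he, h, s4v]⟩))))
            · exact Or.inr (Or.inr (Or.inr (Or.inr (Or.inr ⟨h, by rw [he, h, hσδ]⟩))))
        obtain ⟨a, b, hab⟩ := hreal 2 (by omega) (by omega)
        have hDab := hD a b
        obtain ⟨c, hac, hcb⟩ := aux_dist_mid hG' a b 1 (by omega)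
        have hcb1 : G.dist c b = 1 := by omega
        have hDac := hD a c
        have hDcb := hD c b
        obtain ⟨p, hap, hpb⟩ := aux_dist_mid hH' a b 1 (by omega)
        have hpb2 : H.dist p b = 2 := by omega
        have hDap := hD a p
        have hdap : G.dist a p = 5 := by omega
        have hDpb := hD p b
        have hdpb : G.dist p b = 3 := by omega
        have hdcp : G.dist c p = 4 := by
          have t1 := hG'.dist_triangle (u := a) (v := c) (w := p)
          have t2 := hG'.dist_triangle (u := c) (v := b) (w := p)
          have c1 : G.dist b p = G.dist p b := SimpleGraph.dist_comm
          omega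
        have hDcp := hD c p
        have hecp : H.dist c p = 4 := by omega
        have cbp : H.dist b p = H.dist p b := SimpleGraph.dist_comm
        obtain ⟨E, hbE, hEp⟩ := aux_dist_mid hH' b p 1 (by omega)
        have heEp : H.dist E p = 1 := by omega
        have hDbE := hD b E
        have hdbE : G.dist b E = 5 := by omega
        have hDEp := hD E p
        have hdEp : G.dist E p = 5 := by omega
        have heaE : H.dist a E = 2 := by
          have t1 := hH'.dist_triangle (u := a) (v := E) (w := b)
          have t2 := hH'.dist_triangle (u := a) (v := p) (w := E)
          have c1 : H.dist E b = H.dist b E := SimpleGraph.dist_comm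
          have c2 : H.dist p E = H.dist E p := SimpleGraph.dist_comm
          omega
        have hDaE := hD a E
        have hdaE : G.dist a E = 3 := by omega
        have hdcE : G.dist c E = 4 := by
          have t1 := hG'.dist_triangle (u := b) (v := c) (w := E)
          have t2 := hG'.dist_triangle (u := c) (v := a) (w := E)
          have c1 : G.dist b c = G.dist c b := SimpleGraph.dist_comm
          have c2 : G.dist c a = G.dist a c := SimpleGraph.dist_comm
          omega
        have hDcE := hD c E
        have hecE : H.dist c E = 4 := by omega
        obtain ⟨f, hcf, hfp⟩ := aux_dist_mid hH' c p 2 (by omega)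
        have hfp2 : H.dist f p = 2 := by omega
        have hDcf := hD c f
        have hdcf : G.dist c f = 3 := by omega
        have hDfp := hD f p
        have hdfp : G.dist f p = 3 := by omega
        have heaf : H.dist a f = 3 := by
          have t1 := hH'.dist_triangle (u := a) (v := f) (w := c)
          have t2 := hH'.dist_triangle (u := a) (v := p) (w := f)
          have c1 : H.dist f c = H.dist c f := SimpleGraph.dist_comm
          have c2 : H.dist p f = H.dist f p := SimpleGraph.dist_comm
          omega
        have hDaf := hD a f
        have hdaf : G.dist a f = 2 := by omega
        have hDbf := hD b f
        have hbfl : 3 ≤ H.dist b f ∧ H.dist b f ≤ 4 := by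
          have t1 := hH'.dist_triangle (u := c) (v := f) (w := b)
          have t2 := hH'.dist_triangle (u := b) (v := p) (w := f)
          have c1 : H.dist f b = H.dist b f := SimpleGraph.dist_comm
          have c2 : H.dist p f = H.dist f p := SimpleGraph.dist_comm
          constructor <;> omega
        have hDEf := hD E f
        have heEfle : H.dist E f ≤ 3 := by
          have t := hH'.dist_triangle (u := E) (v := p) (w := f)
          have c2 : H.dist p f = H.dist f p := SimpleGraph.dist_comm
          omega
        rcases (by omega : G.dist b f = 2 ∨ G.dist b f = 4) with hbf | hbf
        · have hEf : G.dist E f = 3 := by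
            have t1 := hG'.dist_triangle (u := b) (v := f) (w := E)
            have c1 : G.dist f E = G.dist E f := SimpleGraph.dist_comm
            have t2 := hH'.dist_triangle (u := b) (v := E) (w := f)
            omega
          have heEf : H.dist E f = 2 := by omega
          obtain ⟨q, hcq, hqf⟩ := aux_dist_mid hH' c f 1 (by omega)
          have hqf1 : H.dist q f = 1 := by omega
          have hDqp := hD q p
          have hdqp : G.dist q p = 2 := by
            have t1 := hH'.dist_triangle (u := c) (v := q) (w := p)
            have t2 := hH'.dist_triangle (u := q) (v := f) (w := p)
            omega
          have hDqE := hD q E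
          have hdqE : G.dist q E = 2 := by
            have t1 := hH'.dist_triangle (u := c) (v := q) (w := E)
            have t2 := hH'.dist_triangle (u := q) (v := f) (w := E)
            have c1 : H.dist f E = H.dist E f := SimpleGraph.dist_comm
            omega
          have t := hG'.dist_triangle (u := E) (v := q) (w := p)
          have c1 : G.dist E q = G.dist q E := SimpleGraph.dist_comm
          omega
        · have hEf : G.dist E f = 2 := by
            have t := hH'.dist_triangle (u := b) (v := E) (w := f)
            omega
          obtain ⟨q, hEq, hqf⟩ := aux_dist_mid hG' E f 1 (by omega)
          have hqf1 : G.dist q f = 1 := by omega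
          have hDEq := hD E q
          have hDqf := hD q f
          have hdaq : G.dist a q = 2 := by
            have t1 := hG'.dist_triangle (u := a) (v := q) (w := E)
            have c1 : G.dist q E = G.dist E q := SimpleGraph.dist_comm
            have t2 := hG'.dist_triangle (u := a) (v := f) (w := q)
            have c2 : G.dist f q = G.dist q f := SimpleGraph.dist_comm
            have t3 := hH'.dist_triangle (u := E) (v := a) (w := q)
            have c3 : H.dist E a = H.dist a E := SimpleGraph.dist_comm
            have hDaq := hD a q
            omega
          have hDcq := hD c q
          have hdcq : G.dist c q = 3 := by
            have t1 := hG'.dist_triangle (u := c) (v := q) (w := E)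
            have c1 : G.dist q E = G.dist E q := SimpleGraph.dist_comm
            have t2 := hG'.dist_triangle (u := c) (v := a) (w := q)
            have c2 : G.dist c a = G.dist a c := SimpleGraph.dist_comm
            omega
          have t := hH'.dist_triangle (u := q) (v := c) (w := f)
          have c1 : H.dist q c = H.dist c q := SimpleGraph.dist_comm
          omega
      · -- δ ≥ 6 : contradiction
        have hq2 := (S2 1 3 (by omega) (by omega) (by omega)).2.1
        rw [(by norm_num : (1 : ℕ) + 3 = 4)] at hq2
        have hτ4b := hτb 4 (by omega) (by omega)
        have hτδ1 : σ.symm (δ - 1) = δ - 1 := by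
          have h := σ.symm_apply_apply (δ - 1)
          rw [hσδ1] at h
          exact h
        rcases (by omega : σ.symm 4 = δ - 2 ∨ σ.symm 4 = δ - 1 ∨ σ.symm 4 = δ)
          with hh | hh | hh
        · have : (4 : ℕ) = 2 := σ.symm.injective (by rw [hh, ← hmval])
          omega
        · have : (4 : ℕ) = δ - 1 := σ.symm.injective (by rw [hh, hτδ1])
          omega
        · have : (4 : ℕ) = 1 := σ.symm.injective (by rw [hh, hkδ])
          omega
    · -- σ(2) = 4 : contradiction
      have hr1 := (S1 1 (σ.symm 2 - 1) (by omega) (by omega) (by omega)).2.1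
      rw [(by omega : 1 + (σ.symm 2 - 1) = σ.symm 2)] at hr1
      have hr2 := (S1 1 (σ.symm 2) (by omega) (by omega)
        (by omega)).2.1
      rw [(show 1 + σ.symm 2 = σ.symm 2 + 1 by omega)] at hr2
      have hb1 := hσb (σ.symm 2 - 1) (by omega) (by omega)
      have hb2 := hσb (σ.symm 2 + 1) (by omega) (by omega)
      have hne1 : σ (σ.symm 2 - 1) ≠ δ := by
        intro hh
        have : σ.symm 2 - 1 = (1 : ℕ) := σ.injective (by rw [hh, hσ1δ])
        omega
      have hne2 : σ (σ.symm 2 + 1) ≠ δ := by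
        intro hh
        have : σ.symm 2 + 1 = (1 : ℕ) := σ.injective (by rw [hh, hσ1δ])
        omega
      have hnee : σ (σ.symm 2 - 1) ≠ σ (σ.symm 2 + 1) := by
        intro hh
        have : σ.symm 2 - 1 = σ.symm 2 + 1 := σ.injective hh
        omega
      have hq1 := (S2 1 (δ - 1) (by omega) (by omega) (by omega)).2.1
      rw [(by omega : 1 + (δ - 1) = δ)] at hq1
      rcases (by omega : σ (σ.symm 2 - 1) = δ - 1 ∨ σ (σ.symm 2 + 1) = δ - 1) with hh | hh
      · have h5 : σ.symm (δ - 1) = σ.symm 2 - 1 := by rw [← hh, Equiv.symm_apply_apply]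
        omega
      · have h5 : σ.symm (δ - 1) = σ.symm 2 + 1 := by rw [← hh, Equiv.symm_apply_apply]
        have hmv : σ.symm 2 = δ - 2 := by
          rcases (by omega : σ.symm 2 = δ - 2 ∨ σ.symm 2 = δ - 1) with h6 | h6
          · exact h6
          · exfalso
            rw [h6, (by omega : δ - 1 + 1 = δ)] at hh
            omega
        have hp2 := (S1 2 (δ - 2) (by omega) (by omega) (by omega)).2.1
        rw [(by omega : 2 + (δ - 2) = δ)] at hp2
        have hlast : σ (δ - 2) = 2 := by rw [← hmv]; exact hσm
        omega
end

section
/- Let Γ be a metrically homogeneous graph of generic type with diameter δ, and let σ be a permutation of {1,…,δ} such that Γ^σ is metrically homogeneous and σ(2) = 2. Then for all k with 3 ≤ k ≤ δ, one has |σ(k) − σ(k−2)| ≤ 2 and |σ⁻¹(k) − σ⁻¹(k−2)| ≤ 2. -/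
open SimpleGraph

/-- Along a shortest walk, distances take all intermediate values. -/
lemma walk_intermediate {V : Type*} {G : SimpleGraph V} (hconn : G.Connected) :
    ∀ {x z : V} (p : G.Walk x z), p.length = G.dist x z →
      ∀ m ≤ p.length, ∃ y : V, G.dist x y = m ∧ G.dist y z = p.length - m := by
  intro x z p
  induction p with
  | nil =>
    intro _ m hm
    simp only [SimpleGraph.Walk.length_nil, Nat.le_zero] at hm
    subst hm
    exact ⟨_, SimpleGraph.dist_self, by simp [SimpleGraph.dist_self]⟩
  | @cons x x' z h q ih =>
    intro hlen m hm
    have hq : q.length = G.dist x' z := by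
      have h1 : G.dist x' z ≤ q.length := SimpleGraph.dist_le q
      have h2 : G.dist x z ≤ G.dist x x' + G.dist x' z := hconn.dist_triangle
      have h3 : G.dist x x' ≤ 1 := by
        simpa using SimpleGraph.dist_le (SimpleGraph.Walk.cons h SimpleGraph.Walk.nil)
      simp only [SimpleGraph.Walk.length_cons] at hlen
      omega
    rcases Nat.eq_zero_or_pos m with hm0 | hm0
    · subst hm0
      exact ⟨x, SimpleGraph.dist_self, by simpa using hlen.symm⟩
    · obtain ⟨m', rfl⟩ := Nat.exists_eq_add_of_lt hm0
      simp only [Nat.zero_add] at *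
      simp only [SimpleGraph.Walk.length_cons] at hlen hm
      obtain ⟨y, hy1, hy2⟩ := ih hq m' (by omega)
      refine ⟨y, ?_, ?_⟩
      · have hle : G.dist x y ≤ m' + 1 := by
          have := hconn.dist_triangle (u := x) (v := x') (w := y)
          have h3 : G.dist x x' ≤ 1 := by
            simpa using SimpleGraph.dist_le (SimpleGraph.Walk.cons h SimpleGraph.Walk.nil)
          omega
        have hge : G.dist x z ≤ G.dist x y + G.dist y z := hconn.dist_triangle
        omega
      · simp only [SimpleGraph.Walk.length_cons]
        omega

/-- In a connected graph, intermediate distances are realized on geodesics. -/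
lemma exists_between_dist {V : Type*} {G : SimpleGraph V} (hconn : G.Connected)
    {x z : V} {n m : ℕ} (hd : G.dist x z = n) (hm : m ≤ n) :
    ∃ y : V, G.dist x y = m ∧ G.dist y z = n - m := by
  obtain ⟨p, hp⟩ := hconn.exists_walk_length_eq_dist x z
  obtain ⟨y, h1, h2⟩ := walk_intermediate hconn p hp m (by omega)
  exact ⟨y, h1, by rw [h2, hp, hd]⟩

/-- if `σ(2) = 2`, then consecutive values two apart of `σ` and
`σ⁻¹` differ by at most `2`. -/
theorem sigma_two_apart {V : Type*} (G H : SimpleGraph V) (δ : ℕ)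
    (σ : Equiv.Perm ℕ)
    (hG : IsMetricallyHomogeneous G) (hgen : GenericType G)
    (hdiam : HasDiameter G δ)
    (hperm : ∀ i ∈ Finset.Icc 1 δ, σ i ∈ Finset.Icc 1 δ)
    (hH : IsMetricallyHomogeneous H)
    (htw : ∀ x y : V, x ≠ y → H.dist x y = σ (G.dist x y))
    (h2 : σ 2 = 2) :
    ∀ k : ℕ, 3 ≤ k → k ≤ δ →
      |(σ k : ℤ) - (σ (k - 2) : ℤ)| ≤ 2 ∧
      |(σ.symm k : ℤ) - (σ.symm (k - 2) : ℤ)| ≤ 2 := by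
  intro k hk3 hkδ
  obtain ⟨hGconn, -⟩ := hG
  obtain ⟨hHconn, -⟩ := hH
  obtain ⟨hdle, a, b, hab⟩ := hdiam
  -- every m with 1 ≤ m ≤ δ is realized as a G-distance between distinct points
  have hreal : ∀ m : ℕ, 1 ≤ m → m ≤ δ → ∃ x z : V, x ≠ z ∧ G.dist x z = m := by
    intro m hm1 hmδ
    obtain ⟨y, hy1, -⟩ := exists_between_dist hGconn hab hmδ
    refine ⟨a, y, ?_, hy1⟩
    rintro rfl
    rw [SimpleGraph.dist_self] at hy1; omega
  have hne_of_dist : ∀ (x z : V) {m : ℕ}, G.dist x z = m → 1 ≤ m → x ≠ z := by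
    rintro x z m h hm rfl; rw [SimpleGraph.dist_self] at h; omega
  have hne_of_distH : ∀ (x z : V) {m : ℕ}, H.dist x z = m → 1 ≤ m → x ≠ z := by
    rintro x z m h hm rfl; rw [SimpleGraph.dist_self] at h; omega
  have hσsymm2 : σ.symm 2 = 2 := by
    conv_lhs => rw [← h2]
    exact σ.symm_apply_apply 2
  constructor
  · -- bound for σ : take x,z with G.dist = k and y between
    obtain ⟨x, z, hxz, hdxz⟩ := hreal k (by omega) hkδ
    obtain ⟨y, hy1, hy2⟩ := exists_between_dist hGconn hdxz (show k - 2 ≤ k by omega)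
    have hy2' : G.dist y z = 2 := by rw [hy2]; omega
    have hxy : x ≠ y := hne_of_dist x y hy1 (by omega)
    have hyz : y ≠ z := hne_of_dist y z hy2' (by omega)
    have e1 : H.dist x z = σ k := by rw [htw x z hxz, hdxz]
    have e2 : H.dist x y = σ (k - 2) := by rw [htw x y hxy, hy1]
    have e3 : H.dist y z = 2 := by rw [htw y z hyz, hy2', h2]
    have t1 : H.dist x z ≤ H.dist x y + H.dist y z := hHconn.dist_triangle
    have t2 : H.dist x y ≤ H.dist x z + H.dist z y := hHconn.dist_triangle
    rw [show H.dist z y = H.dist y z from SimpleGraph.dist_comm] at t2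
    rw [e1, e2, e3] at t1 t2
    rw [abs_le]; omega
  · -- bound for σ.symm : find H-distances k and 2
    -- σ restricted to Icc 1 δ is a bijection, so k = σ m for some m in Icc 1 δ
    have himg : ∀ j ∈ Finset.Icc 1 δ, ∃ i ∈ Finset.Icc 1 δ, σ i = j := by
      intro j hj
      have hinj : Set.InjOn σ (Finset.Icc 1 δ) := fun _ _ _ _ h => σ.injective h
      have : (Finset.Icc 1 δ).image σ = Finset.Icc 1 δ := by
        apply Finset.eq_of_subset_of_card_le
        · intro t ht
          obtain ⟨i, hi, rfl⟩ := Finset.mem_image.mp ht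
          exact hperm i hi
        · rw [Finset.card_image_of_injOn hinj]
      rw [← this] at hj
      obtain ⟨i, hi, hσi⟩ := Finset.mem_image.mp hj
      exact ⟨i, hi, hσi⟩
    obtain ⟨m, hm, hσm⟩ := himg k (Finset.mem_Icc.mpr ⟨by omega, hkδ⟩)
    rw [Finset.mem_Icc] at hm
    obtain ⟨x, z, hxz, hdxz⟩ := hreal m hm.1 hm.2
    have hHxz : H.dist x z = k := by rw [htw x z hxz, hdxz, hσm]
    obtain ⟨y, hy1, hy2⟩ := exists_between_dist hHconn hHxz (show k - 2 ≤ k by omega)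
    have hy2' : H.dist y z = 2 := by rw [hy2]; omega
    have hxy : x ≠ y := hne_of_distH x y hy1 (by omega)
    have hyz : y ≠ z := hne_of_distH y z hy2' (by omega)
    -- translate back to G via σ.symm
    have g1 : G.dist x z = σ.symm k := by
      have := htw x z hxz
      rw [hHxz] at this
      rw [this, σ.symm_apply_apply]
    have g2 : G.dist x y = σ.symm (k - 2) := by
      have := htw x y hxy
      rw [hy1] at this
      rw [this, σ.symm_apply_apply]
    have g3 : G.dist y z = 2 := by
      have h' := htw y z hyz
      rw [hy2'] at h'
      exact σ.injective (by rw [h2]; exact h'.symm)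
    have t1 : G.dist x z ≤ G.dist x y + G.dist y z := hGconn.dist_triangle
    have t2 : G.dist x y ≤ G.dist x z + G.dist z y := hGconn.dist_triangle
    rw [show G.dist z y = G.dist y z from SimpleGraph.dist_comm] at t2
    rw [g1, g2, g3] at t1 t2
    rw [abs_le]; omega
end
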